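/- arXiv:1110.5543 — 2 statements merged into one kernel-verified Lean document; each statement's English description precedes it below -/
import Mathlib

section
/- Let ⟨A,B⟩ be a pairing of regular multiplier Hopf algebras, 𝓓 = A⋈B the Drinfel'd double and 𝓗 = A#B the Heisenberg double, regarded as a Yetter-Drinfel'd 𝓓-module algebra via the action (a⋈b)·(a'#b') = a_(3)(b_(1)▶a')S^{-1}(a_(2)) # (b_(2)b'S(b_(3)))◀S^{-1}(a_(1)) and the coaction Γ determined by ((a'⋈b')⊗1)Γ(a#b) = (a'⋈b')(a_(2)⋈b_(1)) ⊗ a_(1)#b_(2). Then 𝓗 is braided 𝓓-commutative: for all h, h' ∈ 𝓗 one has h'h = (h'_(-1)·h)h'_(0). -/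
open TensorProduct LinearMap
open scoped TensorProduct

/-! ## A framework for (an algebraic model of) regular multiplier Hopf algebras

A regular multiplier Hopf algebra `(A, Δ)` is a non-degenerate (possibly non-unital)
algebra `A` together with a coassociative comultiplication (here modelled as a map
`A →ₗ[K] A ⊗[K] A`), such that the canonical maps `T₁ : a ⊗ b ↦ Δ(a)(1 ⊗ b)` and
`T₂ : a ⊗ b ↦ (a ⊗ 1)Δ(b)` are bijective; regularity is encoded by the bijectivity of
the antipode.  The counit and antipode axioms are stated in their "covered"
(multiplied) form, as appropriate for non-unital algebras. -/
structure RegularMultiplierHopf (K : Type) [Field K]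
    (A : Type) [NonUnitalRing A] [Module K A] [SMulCommClass K A A] [IsScalarTower K A A] :
    Type where
  comul : A →ₗ[K] A ⊗[K] A
  counit : A →ₗ[K] K
  antipode : A ≃ₗ[K] A
  mul_nondeg_left : ∀ a : A, (∀ x : A, a * x = 0) → a = 0
  mul_nondeg_right : ∀ a : A, (∀ x : A, x * a = 0) → a = 0
  comul_mul : ∀ a b : A, comul (a * b) = comul a * comul b
  coassoc : ∀ a : A,
    (TensorProduct.assoc K A A A) ((LinearMap.rTensor A comul) (comul a))
      = (LinearMap.lTensor A comul) (comul a)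
  counit_left : ∀ a : A, (TensorProduct.lid K A) ((LinearMap.rTensor A counit) (comul a)) = a
  counit_right : ∀ a : A, (TensorProduct.rid K A) ((LinearMap.lTensor A counit) (comul a)) = a
  counit_mul : ∀ a b : A, counit (a * b) = counit a * counit b
  antipode_mul_left : ∀ a x : A,
    (LinearMap.mul' K A) ((LinearMap.rTensor A antipode.toLinearMap) (comul a)) * x
      = counit a • x
  antipode_mul_right : ∀ a x : A,
    x * (LinearMap.mul' K A) ((LinearMap.lTensor A antipode.toLinearMap) (comul a))
      = counit a • x
  T1_bijective : Function.Bijective fun z : A ⊗[K] A =>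
    (LinearMap.lTensor A (LinearMap.mul' K A))
      ((TensorProduct.assoc K A A A) ((LinearMap.rTensor A comul) z))
  T2_bijective : Function.Bijective fun z : A ⊗[K] A =>
    (LinearMap.rTensor A (LinearMap.mul' K A))
      ((TensorProduct.assoc K A A A).symm ((LinearMap.lTensor A comul) z))

namespace RegularMultiplierHopf

variable {K : Type} [Field K]
variable {A : Type} [NonUnitalRing A] [Module K A] [SMulCommClass K A A] [IsScalarTower K A A]

/-- The iterated comultiplication `a ↦ a₍₁₎ ⊗ (a₍₂₎ ⊗ a₍₃₎)`. -/
noncomputable def comul2 (h : RegularMultiplierHopf K A) : A →ₗ[K] A ⊗[K] (A ⊗[K] A) :=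
  (LinearMap.lTensor A h.comul) ∘ₗ h.comul

end RegularMultiplierHopf

/-- A pairing `⟨A, B⟩` of regular multiplier Hopf algebras: a non-degenerate bilinear
form for which the product of each algebra is dual to the comultiplication of the
other one, compatible with the antipodes.  The duality conditions are expressed via
arbitrary finite Sweedler expansions of the comultiplications. -/
structure MHAPairing (K : Type) [Field K]
    (A : Type) [NonUnitalRing A] [Module K A] [SMulCommClass K A A] [IsScalarTower K A A]
    (B : Type) [NonUnitalRing B] [Module K B] [SMulCommClass K B B] [IsScalarTower K B B]
    (hA : RegularMultiplierHopf K A) (hB : RegularMultiplierHopf K B) : Type where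
  pair : A →ₗ[K] B →ₗ[K] K
  nondeg_left : ∀ a : A, (∀ b : B, pair a b = 0) → a = 0
  nondeg_right : ∀ b : B, (∀ a : A, pair a b = 0) → b = 0
  pair_mul_comul : ∀ (a a' : A) (b : B) (s : Finset ℕ) (b1 b2 : ℕ → B),
    hB.comul b = ∑ i ∈ s, b1 i ⊗ₜ[K] b2 i →
    pair (a * a') b = ∑ i ∈ s, pair a (b1 i) * pair a' (b2 i)
  pair_comul_mul : ∀ (a : A) (b b' : B) (s : Finset ℕ) (a1 a2 : ℕ → A),
    hA.comul a = ∑ i ∈ s, a1 i ⊗ₜ[K] a2 i →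
    pair a (b * b') = ∑ i ∈ s, pair (a1 i) b * pair (a2 i) b'
  pair_antipode : ∀ (a : A) (b : B), pair (hA.antipode a) b = pair a (hB.antipode b)

namespace MHAPairing

variable {K : Type} [Field K]
variable {A : Type} [NonUnitalRing A] [Module K A] [SMulCommClass K A A] [IsScalarTower K A A]
variable {B : Type} [NonUnitalRing B] [Module K B] [SMulCommClass K B B] [IsScalarTower K B B]
variable {hA : RegularMultiplierHopf K A} {hB : RegularMultiplierHopf K B}

/-- `b ▶ a = ⟨a₍₂₎, b⟩ a₍₁₎`, the left regular action of `B` on `A`. -/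
noncomputable def lact (P : MHAPairing K A B hA hB) (b : B) (a : A) : A :=
  (TensorProduct.rid K A) ((LinearMap.lTensor A (P.pair.flip b)) (hA.comul a))

/-- `a ◀ b = ⟨a₍₁₎, b⟩ a₍₂₎`, the right regular action of `B` on `A`. -/
noncomputable def ract (P : MHAPairing K A B hA hB) (a : A) (b : B) : A :=
  (TensorProduct.lid K A) ((LinearMap.rTensor A (P.pair.flip b)) (hA.comul a))

/-- `a ▶ b = ⟨a, b₍₂₎⟩ b₍₁₎`, the left regular action of `A` on `B`. -/
noncomputable def lactB (P : MHAPairing K A B hA hB) (a : A) (b : B) : B :=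
  (TensorProduct.rid K B) ((LinearMap.lTensor B (P.pair a)) (hB.comul b))

/-- `b ◀ a = ⟨a, b₍₁₎⟩ b₍₂₎`, the right regular action of `A` on `B`. -/
noncomputable def ractB (P : MHAPairing K A B hA hB) (b : B) (a : A) : B :=
  (TensorProduct.lid K B) ((LinearMap.rTensor B (P.pair a)) (hB.comul b))

end MHAPairing

namespace HBCAux

variable {K : Type} [Field K]

section Repr
variable {M N : Type} [AddCommGroup M] [AddCommGroup N] [Module K M] [Module K N]

lemma exists_repr (z : M ⊗[K] N) :
    ∃ (s : Finset ℕ) (f : ℕ → M) (g : ℕ → N), z = ∑ i ∈ s, f i ⊗ₜ[K] g i := by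
  induction z using TensorProduct.induction_on with
  | zero => exact ⟨∅, 0, 0, by simp⟩
  | tmul m n => exact ⟨{0}, fun _ => m, fun _ => n, by simp⟩
  | add x y hx hy =>
    obtain ⟨s, f, g, rfl⟩ := hx
    obtain ⟨t, f', g', rfl⟩ := hy
    refine ⟨(s.image fun i => 2*i) ∪ (t.image fun i => 2*i+1),
      fun n => if n % 2 = 0 then f (n/2) else f' (n/2),
      fun n => if n % 2 = 0 then g (n/2) else g' (n/2), ?_⟩
    rw [Finset.sum_union]
    · rw [Finset.sum_image (by intro x _ y _ (h : 2*x = 2*y); omega), Finset.sum_image (by intro x _ y _ (h : 2*x+1 = 2*y+1); omega)]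
      congr 1
      · exact Finset.sum_congr rfl fun i _ => by norm_num
      · refine Finset.sum_congr rfl fun i _ => by
          have h1 : (2*i+1) % 2 = 1 := by omega
          have h2 : (2*i+1) / 2 = i := by omega
          simp [h1, h2]
    · rw [Finset.disjoint_left]
      rintro x hx hy
      simp only [Finset.mem_image] at hx hy
      obtain ⟨i, _, rfl⟩ := hx
      obtain ⟨j, _, hj⟩ := hy
      omega

end Repr

end HBCAux
namespace HBCAux

variable {K : Type} [Field K]

section Generic
variable {A : Type} [NonUnitalRing A] [Module K A] [SMulCommClass K A A] [IsScalarTower K A A]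
variable (h : RegularMultiplierHopf K A)
variable {ι κ : Type} {s : Finset ι} {f g : ι → A} {a : A}

lemma counit_left_sum (hz : h.comul a = ∑ i ∈ s, f i ⊗ₜ[K] g i) :
    ∑ i ∈ s, h.counit (f i) • g i = a := by
  have H := h.counit_left a
  rw [hz, map_sum, map_sum] at H
  simpa using H

lemma counit_right_sum (hz : h.comul a = ∑ i ∈ s, f i ⊗ₜ[K] g i) :
    ∑ i ∈ s, h.counit (g i) • f i = a := by
  have H := h.counit_right a
  rw [hz, map_sum, map_sum] at H
  simpa using H

lemma antipode_sum_left (hz : h.comul a = ∑ i ∈ s, f i ⊗ₜ[K] g i) (x : A) :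
    (∑ i ∈ s, h.antipode (f i) * g i) * x = h.counit a • x := by
  have H := h.antipode_mul_left a x
  rw [hz, map_sum, map_sum] at H
  simpa using H

lemma antipode_sum_right (hz : h.comul a = ∑ i ∈ s, f i ⊗ₜ[K] g i) (x : A) :
    x * (∑ i ∈ s, f i * h.antipode (g i)) = h.counit a • x := by
  have H := h.antipode_mul_right a x
  rw [hz, map_sum, map_sum] at H
  simpa using H

/-- upgrade: a left multiplier identity yields the right-sided one. -/
lemma right_of_left (h : RegularMultiplierHopf K A) {e : A} {c : K}
    (he : ∀ x : A, e * x = c • x) (y : A) : y * e = c • y := by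
  have key : ∀ x : A, (y * e - c • y) * x = 0 := by
    intro x
    rw [sub_mul, mul_assoc, he, mul_smul_comm, smul_mul_assoc, sub_self]
  have := h.mul_nondeg_left _ key
  rwa [sub_eq_zero] at this

lemma left_of_right (h : RegularMultiplierHopf K A) {e : A} {c : K}
    (he : ∀ x : A, x * e = c • x) (y : A) : e * y = c • y := by
  have key : ∀ x : A, x * (e * y - c • y) = 0 := by
    intro x
    rw [mul_sub, ← mul_assoc, he, mul_smul_comm, smul_mul_assoc, sub_self]
  have := h.mul_nondeg_right _ key
  rwa [sub_eq_zero] at this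

lemma antipode_sum_left' (hz : h.comul a = ∑ i ∈ s, f i ⊗ₜ[K] g i) (x : A) :
    x * (∑ i ∈ s, h.antipode (f i) * g i) = h.counit a • x :=
  right_of_left h (antipode_sum_left h hz) x

lemma antipode_sum_right' (hz : h.comul a = ∑ i ∈ s, f i ⊗ₜ[K] g i) (x : A) :
    (∑ i ∈ s, f i * h.antipode (g i)) * x = h.counit a • x :=
  left_of_right h (antipode_sum_right h hz) x

lemma counit_antipode (a : A) : h.counit (h.antipode a) = h.counit a := by
  by_cases hε : ∀ x : A, h.counit x = 0
  · rw [hε, hε]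
  · push_neg at hε
    obtain ⟨x, hx⟩ := hε
    obtain ⟨s, f, g, hz⟩ := exists_repr (h.comul a)
    have H := antipode_sum_left h hz x
    have H2 := congrArg h.counit H
    rw [map_smul, smul_eq_mul, h.counit_mul, map_sum] at H2
    have e1 : ∑ i ∈ s, h.counit (h.antipode (f i) * g i) = h.counit (h.antipode a) := by
      rw [← counit_right_sum h hz, map_sum, map_sum]
      exact Finset.sum_congr rfl fun i _ => by
        simp [h.counit_mul, mul_comm]
    rw [e1] at H2
    exact mul_right_cancel₀ hx H2

lemma counit_antipode_symm (a : A) : h.counit (h.antipode.symm a) = h.counit a := by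
  conv_rhs => rw [show a = h.antipode (h.antipode.symm a) from (h.antipode.apply_symm_apply a).symm]
  rw [counit_antipode]

lemma comul_mul_sum {t : Finset κ} {f' g' : κ → A} {b : A}
    (hz : h.comul a = ∑ i ∈ s, f i ⊗ₜ[K] g i)
    (hz' : h.comul b = ∑ j ∈ t, f' j ⊗ₜ[K] g' j) :
    h.comul (a * b) = ∑ i ∈ s, ∑ j ∈ t, (f i * f' j) ⊗ₜ[K] (g i * g' j) := by
  rw [h.comul_mul, hz, hz', Finset.sum_mul_sum]
  exact Finset.sum_congr rfl fun i _ => Finset.sum_congr rfl fun j _ => by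
    rw [Algebra.TensorProduct.tmul_mul_tmul]

/-- The coassociativity workhorse: re-associating a two-step Sweedler expansion. -/
lemma coassoc_sum {M : Type} [AddCommGroup M] [Module K M]
    (G : A ⊗[K] (A ⊗[K] A) →ₗ[K] M)
    (hz : h.comul a = ∑ i ∈ s, f i ⊗ₜ[K] g i)
    {κ₂ : Type} {u : ι → Finset κ} {f1 f2 : ι → κ → A}
    (hf : ∀ i ∈ s, h.comul (f i) = ∑ j ∈ u i, f1 i j ⊗ₜ[K] f2 i j)
    {v : ι → Finset κ₂} {g1 g2 : ι → κ₂ → A}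
    (hg : ∀ i ∈ s, h.comul (g i) = ∑ j ∈ v i, g1 i j ⊗ₜ[K] g2 i j) :
    ∑ i ∈ s, ∑ j ∈ u i, G (f1 i j ⊗ₜ[K] (f2 i j ⊗ₜ[K] g i))
      = ∑ i ∈ s, ∑ j ∈ v i, G (f i ⊗ₜ[K] (g1 i j ⊗ₜ[K] g2 i j)) := by
  have e1 : (TensorProduct.assoc K A A A) ((rTensor A h.comul) (h.comul a))
      = ∑ i ∈ s, ∑ j ∈ u i, f1 i j ⊗ₜ[K] (f2 i j ⊗ₜ[K] g i) := by
    rw [hz, map_sum, map_sum]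
    refine Finset.sum_congr rfl fun i hi => ?_
    rw [rTensor_tmul, hf i hi, sum_tmul, map_sum]
    exact Finset.sum_congr rfl fun j _ => by rw [assoc_tmul]
  have e2 : (lTensor A h.comul) (h.comul a)
      = ∑ i ∈ s, ∑ j ∈ v i, f i ⊗ₜ[K] (g1 i j ⊗ₜ[K] g2 i j) := by
    rw [hz, map_sum]
    refine Finset.sum_congr rfl fun i hi => ?_
    rw [lTensor_tmul, hg i hi, tmul_sum]
  calc ∑ i ∈ s, ∑ j ∈ u i, G (f1 i j ⊗ₜ[K] (f2 i j ⊗ₜ[K] g i))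
      = G ((TensorProduct.assoc K A A A) ((rTensor A h.comul) (h.comul a))) := by
        rw [e1, map_sum]; exact Finset.sum_congr rfl fun i _ => (map_sum _ _ _).symm
    _ = G ((lTensor A h.comul) (h.comul a)) := by rw [h.coassoc]
    _ = ∑ i ∈ s, ∑ j ∈ v i, G (f i ⊗ₜ[K] (g1 i j ⊗ₜ[K] g2 i j)) := by
        rw [e2, map_sum]; exact Finset.sum_congr rfl fun i _ => map_sum _ _ _

end Generic

end HBCAux

namespace HBCAux

variable {K : Type} [Field K]

section Generic2
variable {A : Type} [NonUnitalRing A] [Module K A] [SMulCommClass K A A] [IsScalarTower K A A]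
variable (h : RegularMultiplierHopf K A)
variable {ι κ : Type} {s : Finset ι} {f g : ι → A} {a : A}

lemma collapse_23 (hz : h.comul a = ∑ i ∈ s, f i ⊗ₜ[K] g i)
    {u : ι → Finset κ} {f1 f2 : ι → κ → A}
    (hf : ∀ i ∈ s, h.comul (f i) = ∑ j ∈ u i, f1 i j ⊗ₜ[K] f2 i j) (z : A) :
    ∑ i ∈ s, ∑ j ∈ u i, (f1 i j) ⊗ₜ[K] (f2 i j * h.antipode (g i) * z) = a ⊗ₜ[K] z := by
  have hch : ∀ i : ι, ∃ (t : Finset ℕ) (p q : ℕ → A),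
      h.comul (g i) = ∑ j ∈ t, p j ⊗ₜ[K] q j := fun i => exists_repr _
  choose v g1 g2 hg using hch
  set G : A ⊗[K] (A ⊗[K] A) →ₗ[K] A ⊗[K] A :=
    lTensor A ((mulRight K z) ∘ₗ (LinearMap.mul' K A) ∘ₗ (lTensor A h.antipode.toLinearMap))
    with hG
  have hGapp : ∀ p q r : A, G (p ⊗ₜ[K] (q ⊗ₜ[K] r)) = p ⊗ₜ[K] (q * h.antipode r * z) := by
    intro p q r; simp [hG]
  calc ∑ i ∈ s, ∑ j ∈ u i, (f1 i j) ⊗ₜ[K] (f2 i j * h.antipode (g i) * z)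
      = ∑ i ∈ s, ∑ j ∈ u i, G (f1 i j ⊗ₜ[K] (f2 i j ⊗ₜ[K] g i)) := by
        exact Finset.sum_congr rfl fun i _ => Finset.sum_congr rfl fun j _ => (hGapp _ _ _).symm
    _ = ∑ i ∈ s, ∑ j ∈ v i, G (f i ⊗ₜ[K] (g1 i j ⊗ₜ[K] g2 i j)) :=
        coassoc_sum h G hz hf (fun i _ => hg i)
    _ = ∑ i ∈ s, f i ⊗ₜ[K] ((∑ j ∈ v i, g1 i j * h.antipode (g2 i j)) * z) := by
        refine Finset.sum_congr rfl fun i _ => ?_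
        rw [Finset.sum_mul, tmul_sum]
        exact Finset.sum_congr rfl fun j _ => hGapp _ _ _
    _ = ∑ i ∈ s, h.counit (g i) • (f i ⊗ₜ[K] z) := by
        refine Finset.sum_congr rfl fun i _ => ?_
        rw [antipode_sum_right' h (hg i), tmul_smul]
    _ = a ⊗ₜ[K] z := by
        have hc := counit_right_sum h hz
        rw [← hc, sum_tmul]
        exact Finset.sum_congr rfl fun i _ => (smul_tmul' _ _ _).symm

lemma collapse_phi (φ : A →ₗ[K] A) (hz : h.comul a = ∑ i ∈ s, f i ⊗ₜ[K] g i)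
    {u : ι → Finset κ} {f1 f2 : ι → κ → A}
    (hf : ∀ i ∈ s, h.comul (f i) = ∑ j ∈ u i, f1 i j ⊗ₜ[K] f2 i j) :
    ∑ i ∈ s, ∑ j ∈ u i, φ (f1 i j) * (f2 i j * h.antipode (g i)) = φ a := by
  have hch : ∀ i : ι, ∃ (t : Finset ℕ) (p q : ℕ → A),
      h.comul (g i) = ∑ j ∈ t, p j ⊗ₜ[K] q j := fun i => exists_repr _
  choose v g1 g2 hg using hch
  set G : A ⊗[K] (A ⊗[K] A) →ₗ[K] A :=
    (LinearMap.mul' K A) ∘ₗ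
      (TensorProduct.map φ ((LinearMap.mul' K A) ∘ₗ (lTensor A h.antipode.toLinearMap)))
    with hG
  have hGapp : ∀ p q r : A, G (p ⊗ₜ[K] (q ⊗ₜ[K] r)) = φ p * (q * h.antipode r) := by
    intro p q r; simp [hG]
  calc ∑ i ∈ s, ∑ j ∈ u i, φ (f1 i j) * (f2 i j * h.antipode (g i))
      = ∑ i ∈ s, ∑ j ∈ u i, G (f1 i j ⊗ₜ[K] (f2 i j ⊗ₜ[K] g i)) := by
        exact Finset.sum_congr rfl fun i _ => Finset.sum_congr rfl fun j _ => (hGapp _ _ _).symm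
    _ = ∑ i ∈ s, ∑ j ∈ v i, G (f i ⊗ₜ[K] (g1 i j ⊗ₜ[K] g2 i j)) :=
        coassoc_sum h G hz hf (fun i _ => hg i)
    _ = ∑ i ∈ s, φ (f i) * (∑ j ∈ v i, g1 i j * h.antipode (g2 i j)) := by
        refine Finset.sum_congr rfl fun i _ => ?_
        rw [Finset.mul_sum]
        exact Finset.sum_congr rfl fun j _ => hGapp _ _ _
    _ = ∑ i ∈ s, h.counit (g i) • φ (f i) := by
        refine Finset.sum_congr rfl fun i _ => ?_
        rw [antipode_sum_right h (hg i)]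
    _ = φ a := by
        simp_rw [← map_smul]
        rw [← map_sum, counit_right_sum h hz]

lemma antipode_antimul (a b : A) :
    h.antipode (a * b) = h.antipode b * h.antipode a := by
  obtain ⟨s, f, g, hza⟩ := exists_repr (h.comul a)
  obtain ⟨t, f', g', hzb⟩ := exists_repr (h.comul b)
  choose uf p q hf using fun i : ℕ => exists_repr (h.comul (f i))
  choose uf' p' q' hf' using fun j : ℕ => exists_repr (h.comul (f' j))
  have way1 :
      ∑ i ∈ s, ∑ j ∈ t,
        (LinearMap.mul' K A) ((rTensor A h.antipode.toLinearMap) (h.comul (f i * f' j)))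
          * (h.antipode (g' j) * h.antipode (g i))
      = h.antipode b * h.antipode a := by
    have hSb : ∑ j ∈ t, h.counit (f' j) • h.antipode (g' j) = h.antipode b := by
      simp_rw [← map_smul]; rw [← map_sum, counit_left_sum h hzb]
    have hSa : ∑ i ∈ s, h.counit (f i) • h.antipode (g i) = h.antipode a := by
      simp_rw [← map_smul]; rw [← map_sum, counit_left_sum h hza]
    calc ∑ i ∈ s, ∑ j ∈ t,
        (LinearMap.mul' K A) ((rTensor A h.antipode.toLinearMap) (h.comul (f i * f' j)))
          * (h.antipode (g' j) * h.antipode (g i))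
        = ∑ i ∈ s, ∑ j ∈ t,
            (h.counit (f' j) • h.antipode (g' j)) * (h.counit (f i) • h.antipode (g i)) := by
          refine Finset.sum_congr rfl fun i _ => Finset.sum_congr rfl fun j _ => ?_
          rw [h.antipode_mul_left, h.counit_mul, smul_mul_smul_comm,
            mul_comm (h.counit (f' j))]
      _ = ∑ i ∈ s, (∑ j ∈ t, h.counit (f' j) • h.antipode (g' j))
            * (h.counit (f i) • h.antipode (g i)) := by
          exact Finset.sum_congr rfl fun i _ => (Finset.sum_mul _ _ _).symm
      _ = h.antipode b * h.antipode a := by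
          rw [← Finset.mul_sum]
          rw [hSb, hSa]
  rw [← way1]
  symm
  -- way 2
  calc ∑ i ∈ s, ∑ j ∈ t,
        (LinearMap.mul' K A) ((rTensor A h.antipode.toLinearMap) (h.comul (f i * f' j)))
          * (h.antipode (g' j) * h.antipode (g i))
      = ∑ i ∈ s, ∑ k ∈ uf i, (h.antipode (p i k * b) * q i k) * h.antipode (g i) := by
        refine Finset.sum_congr rfl fun i hi => ?_
        calc ∑ j ∈ t,
            (LinearMap.mul' K A) ((rTensor A h.antipode.toLinearMap) (h.comul (f i * f' j)))
              * (h.antipode (g' j) * h.antipode (g i))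
            = ∑ j ∈ t, ∑ k ∈ uf i, ∑ l ∈ uf' j,
                (h.antipode (p i k * p' j l) * (q i k * q' j l))
                  * (h.antipode (g' j) * h.antipode (g i)) := by
              refine Finset.sum_congr rfl fun j _ => ?_
              rw [comul_mul_sum h (hf i) (hf' j)]
              simp only [map_sum, rTensor_tmul, LinearMap.mul'_apply, Finset.sum_mul,
                LinearEquiv.coe_coe]
          _ = ∑ k ∈ uf i, ∑ j ∈ t, ∑ l ∈ uf' j,
                (h.antipode (p i k * p' j l) * (q i k * q' j l))
                  * (h.antipode (g' j) * h.antipode (g i)) := Finset.sum_comm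
          _ = ∑ k ∈ uf i, (h.antipode (p i k * b) * q i k) * h.antipode (g i) := by
              refine Finset.sum_congr rfl fun k hk => ?_
              set u : A →ₗ[K] A :=
                (mulRight K (q i k)) ∘ₗ h.antipode.toLinearMap ∘ₗ (mulLeft K (p i k)) with hu
              set LB : A ⊗[K] A →ₗ[K] A := (LinearMap.mul' K A) ∘ₗ (rTensor A u) with hLB
              have hLBapp : ∀ α β : A, LB (α ⊗ₜ[K] β)
                  = h.antipode (p i k * α) * q i k * β := by
                intro α β; simp [hLB, hu]
              have key := congrArg LB (collapse_23 h hzb (fun j _ => hf' j) (h.antipode (g i)))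
              rw [map_sum] at key
              calc ∑ j ∈ t, ∑ l ∈ uf' j,
                  (h.antipode (p i k * p' j l) * (q i k * q' j l))
                    * (h.antipode (g' j) * h.antipode (g i))
                  = ∑ j ∈ t, ∑ l ∈ uf' j,
                      LB (p' j l ⊗ₜ[K] (q' j l * h.antipode (g' j) * h.antipode (g i))) := by
                    refine Finset.sum_congr rfl fun j _ =>
                      Finset.sum_congr rfl fun l _ => ?_
                    rw [hLBapp]
                    simp only [mul_assoc]
                _ = LB (b ⊗ₜ[K] h.antipode (g i)) := by
                    rw [← key]
                    exact Finset.sum_congr rfl fun j _ => (map_sum _ _ _).symm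
                _ = h.antipode (p i k * b) * q i k * h.antipode (g i) := hLBapp _ _
    _ = h.antipode (a * b) := by
        have := collapse_phi h (h.antipode.toLinearMap ∘ₗ (mulRight K b)) hza (fun i _ => hf i)
        simp only [coe_comp, Function.comp_apply, mulRight_apply, LinearEquiv.coe_coe] at this
        rw [← this]
        exact Finset.sum_congr rfl fun i _ => Finset.sum_congr rfl fun k _ => by
          rw [mul_assoc]

end Generic2

end HBCAux

namespace HBCAux

section Pairing
variable {K : Type} [Field K]
variable {A : Type} [NonUnitalRing A] [Module K A] [SMulCommClass K A A] [IsScalarTower K A A]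
variable {B : Type} [NonUnitalRing B] [Module K B] [SMulCommClass K B B] [IsScalarTower K B B]
variable {hA : RegularMultiplierHopf K A} {hB : RegularMultiplierHopf K B}
variable (P : MHAPairing K A B hA hB)

lemma pair_antipode_symm (a : A) (b : B) :
    P.pair (hA.antipode.symm a) b = P.pair a (hB.antipode.symm b) := by
  have := P.pair_antipode (hA.antipode.symm a) (hB.antipode.symm b)
  rw [hA.antipode.apply_symm_apply, hB.antipode.apply_symm_apply] at this
  exact this.symm

/-- the pairing of `A ⊗ A` against a pair of elements of `B`. -/
noncomputable def pair2 (b b' : B) : A ⊗[K] A →ₗ[K] K :=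
  (LinearMap.mul' K K) ∘ₗ (TensorProduct.map (P.pair.flip b) (P.pair.flip b'))

@[simp] lemma pair2_tmul (b b' : B) (x y : A) :
    pair2 P b b' (x ⊗ₜ[K] y) = P.pair x b * P.pair y b' := by
  simp [pair2]

/-- the pairing of `B ⊗ B` against a pair of elements of `A`. -/
noncomputable def pair2B (a a' : A) : B ⊗[K] B →ₗ[K] K :=
  (LinearMap.mul' K K) ∘ₗ (TensorProduct.map (P.pair a) (P.pair a'))

@[simp] lemma pair2B_tmul (a a' : A) (x y : B) :
    pair2B P a a' (x ⊗ₜ[K] y) = P.pair a x * P.pair a' y := by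
  simp [pair2B]

lemma ext_pair2 {t : A ⊗[K] A} (ht : ∀ b b' : B, pair2 P b b' t = 0) : t = 0 := by
  classical
  have step1 : ∀ b : B, (TensorProduct.lid K A) ((rTensor A (P.pair.flip b)) t) = 0 := by
    intro b
    apply P.nondeg_left
    intro b'
    have compat : ∀ tt : A ⊗[K] A,
        P.pair ((TensorProduct.lid K A) ((rTensor A (P.pair.flip b)) tt)) b'
          = pair2 P b b' tt := by
      intro tt
      induction tt using TensorProduct.induction_on with
      | zero => simp
      | tmul x y => simp [smul_eq_mul]
      | add x y hx hy => simp [map_add, hx, hy]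
    rw [compat]; exact ht b b'
  let e := Module.Basis.ofVectorSpace K A
  let Ψ := (TensorProduct.congr (LinearEquiv.refl K A) e.repr).trans
    (TensorProduct.finsuppScalarRight K K A _)
  have compatΨ : ∀ (tt : A ⊗[K] A) (i) (b : B),
      P.pair (Ψ tt i) b
        = e.repr ((TensorProduct.lid K A) ((rTensor A (P.pair.flip b)) tt)) i := by
    intro tt i b
    induction tt using TensorProduct.induction_on with
    | zero => simp only [map_zero, Finsupp.coe_zero, Pi.zero_apply, LinearMap.map_zero, LinearMap.zero_apply]
    | tmul x y =>
      simp [Ψ, TensorProduct.congr_tmul, smul_eq_mul, mul_comm]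
    | add x y hx hy =>
      simp only [map_add, Finsupp.add_apply, LinearEquiv.trans_apply] at hx hy ⊢
      simp [hx, hy]
  have hzero : ∀ i, Ψ t i = 0 := by
    intro i
    apply P.nondeg_left
    intro b
    rw [compatΨ, step1]; simp
  have hΨ : Ψ t = 0 := Finsupp.ext hzero
  exact (LinearEquiv.map_eq_zero_iff Ψ).mp hΨ

lemma ext_pair2B {t : B ⊗[K] B} (ht : ∀ a a' : A, pair2B P a a' t = 0) : t = 0 := by
  classical
  have step1 : ∀ a : A, (TensorProduct.lid K B) ((rTensor B (P.pair a)) t) = 0 := by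
    intro a
    apply P.nondeg_right
    intro a'
    have compat : ∀ tt : B ⊗[K] B,
        P.pair a' ((TensorProduct.lid K B) ((rTensor B (P.pair a)) tt))
          = pair2B P a a' tt := by
      intro tt
      induction tt using TensorProduct.induction_on with
      | zero => simp
      | tmul x y => simp [smul_eq_mul, mul_comm]
      | add x y hx hy => simp [map_add, hx, hy]
    rw [compat]; exact ht a a'
  let e := Module.Basis.ofVectorSpace K B
  let Ψ := (TensorProduct.congr (LinearEquiv.refl K B) e.repr).trans
    (TensorProduct.finsuppScalarRight K K B _)
  have compatΨ : ∀ (tt : B ⊗[K] B) (i) (a : A),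
      P.pair a (Ψ tt i)
        = e.repr ((TensorProduct.lid K B) ((rTensor B (P.pair a)) tt)) i := by
    intro tt i a
    induction tt using TensorProduct.induction_on with
    | zero => simp only [map_zero, Finsupp.coe_zero, Pi.zero_apply, LinearMap.map_zero, LinearMap.zero_apply]
    | tmul x y =>
      simp [Ψ, TensorProduct.congr_tmul, smul_eq_mul, mul_comm]
    | add x y hx hy =>
      simp only [map_add, Finsupp.add_apply, LinearEquiv.trans_apply] at hx hy ⊢
      simp [hx, hy]
  have hzero : ∀ i, Ψ t i = 0 := by
    intro i
    apply P.nondeg_right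
    intro a
    rw [compatΨ, step1]; simp
  have hΨ : Ψ t = 0 := Finsupp.ext hzero
  exact (LinearEquiv.map_eq_zero_iff Ψ).mp hΨ


lemma pair_comul_mul' {ι : Type} {s : Finset ι} {f g : ι → A} {a : A}
    (hz : hA.comul a = ∑ i ∈ s, f i ⊗ₜ[K] g i) (b b' : B) :
    P.pair a (b * b') = ∑ i ∈ s, P.pair (f i) b * P.pair (g i) b' := by
  obtain ⟨t, u, v, huv⟩ := exists_repr (hA.comul a)
  rw [P.pair_comul_mul a b b' t u v huv]
  have e1 : ∑ i ∈ t, P.pair (u i) b * P.pair (v i) b' = pair2 P b b' (hA.comul a) := by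
    rw [huv, map_sum]
    exact Finset.sum_congr rfl fun i _ => (pair2_tmul P b b' _ _).symm
  have e2 : ∑ i ∈ s, P.pair (f i) b * P.pair (g i) b' = pair2 P b b' (hA.comul a) := by
    rw [hz, map_sum]
    exact Finset.sum_congr rfl fun i _ => (pair2_tmul P b b' _ _).symm
  rw [e1, e2]

lemma pair_mul_comul' {ι : Type} {s : Finset ι} {f g : ι → B} {b : B}
    (hz : hB.comul b = ∑ i ∈ s, f i ⊗ₜ[K] g i) (x y : A) :
    P.pair (x * y) b = ∑ i ∈ s, P.pair x (f i) * P.pair y (g i) := by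
  obtain ⟨t, u, v, huv⟩ := exists_repr (hB.comul b)
  rw [P.pair_mul_comul x y b t u v huv]
  have e1 : ∑ i ∈ t, P.pair x (u i) * P.pair y (v i) = pair2B P x y (hB.comul b) := by
    rw [huv, map_sum]
    exact Finset.sum_congr rfl fun i _ => (pair2B_tmul P x y _ _).symm
  have e2 : ∑ i ∈ s, P.pair x (f i) * P.pair y (g i) = pair2B P x y (hB.comul b) := by
    rw [hz, map_sum]
    exact Finset.sum_congr rfl fun i _ => (pair2B_tmul P x y _ _).symm
  rw [e1, e2]

variable {ι κ : Type} {s : Finset ι} {f g : ι → A} {a : A}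

include P

lemma comul_antipode (hz : hA.comul a = ∑ i ∈ s, f i ⊗ₜ[K] g i) :
    hA.comul (hA.antipode a)
      = ∑ i ∈ s, hA.antipode (g i) ⊗ₜ[K] hA.antipode (f i) := by
  rw [← sub_eq_zero]
  apply ext_pair2 P
  intro b b'
  rw [map_sub, sub_eq_zero]
  obtain ⟨t, u, v, huv⟩ := exists_repr (hA.comul (hA.antipode a))
  have L : pair2 P b b' (hA.comul (hA.antipode a)) = P.pair (hA.antipode a) (b * b') := by
    rw [huv, map_sum, P.pair_comul_mul _ b b' t u v huv]
    simp
  have R : pair2 P b b' (∑ i ∈ s, hA.antipode (g i) ⊗ₜ[K] hA.antipode (f i))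
      = ∑ i ∈ s, P.pair (hA.antipode (g i)) b * P.pair (hA.antipode (f i)) b' := by
    rw [map_sum]
    exact Finset.sum_congr rfl fun i _ => by simp
  rw [L, R, P.pair_antipode, antipode_antimul hB b b',
    pair_comul_mul' P hz _ _]
  exact Finset.sum_congr rfl fun i _ => by
    rw [← P.pair_antipode, ← P.pair_antipode, mul_comm]

variable {t' : Finset κ} {fB gB : κ → B} {b : B}

lemma comul_antipodeB (hz : hB.comul b = ∑ i ∈ t', fB i ⊗ₜ[K] gB i) :
    hB.comul (hB.antipode b)
      = ∑ i ∈ t', hB.antipode (gB i) ⊗ₜ[K] hB.antipode (fB i) := by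
  rw [← sub_eq_zero]
  apply ext_pair2B P
  intro a a'
  rw [map_sub, sub_eq_zero]
  obtain ⟨t, u, v, huv⟩ := exists_repr (hB.comul (hB.antipode b))
  have L : pair2B P a a' (hB.comul (hB.antipode b)) = P.pair (a * a') (hB.antipode b) := by
    rw [huv, map_sum, P.pair_mul_comul a a' _ t u v huv]
    simp
  have R : pair2B P a a' (∑ i ∈ t', hB.antipode (gB i) ⊗ₜ[K] hB.antipode (fB i))
      = ∑ i ∈ t', P.pair a (hB.antipode (gB i)) * P.pair a' (hB.antipode (fB i)) := by
    rw [map_sum]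
    exact Finset.sum_congr rfl fun i _ => by simp
  rw [L, R, ← P.pair_antipode, antipode_antimul hA a a',
    pair_mul_comul' P hz _ _]
  exact Finset.sum_congr rfl fun i _ => by
    rw [P.pair_antipode, P.pair_antipode, mul_comm]

lemma antipode_symm_sum (hz : hA.comul a = ∑ i ∈ s, f i ⊗ₜ[K] g i) (x : A) :
    (∑ i ∈ s, hA.antipode.symm (g i) * f i) * x = hA.counit a • x := by
  obtain ⟨t, p, q, hy⟩ := exists_repr (hA.comul (hA.antipode.symm a))
  have h2 : hA.comul a = ∑ j ∈ t, hA.antipode (q j) ⊗ₜ[K] hA.antipode (p j) := by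
    conv_lhs => rw [show a = hA.antipode (hA.antipode.symm a) from
      (hA.antipode.apply_symm_apply a).symm]
    exact comul_antipode P hy
  set V : A ⊗[K] A →ₗ[K] A :=
    (LinearMap.mul' K A) ∘ₗ (rTensor A hA.antipode.symm.toLinearMap)
      ∘ₗ (TensorProduct.comm K A A).toLinearMap with hV
  have hVapp : ∀ α β : A, V (α ⊗ₜ[K] β) = hA.antipode.symm β * α := by
    intro α β; simp [hV]
  have indep : ∑ i ∈ s, hA.antipode.symm (g i) * f i
      = ∑ j ∈ t, p j * hA.antipode (q j) := by
    calc ∑ i ∈ s, hA.antipode.symm (g i) * f i = V (hA.comul a) := by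
          rw [hz, map_sum]
          exact Finset.sum_congr rfl fun i _ => (hVapp _ _).symm
      _ = ∑ j ∈ t, p j * hA.antipode (q j) := by
          rw [h2, map_sum]
          refine Finset.sum_congr rfl fun j _ => ?_
          rw [hVapp, hA.antipode.symm_apply_apply]
  rw [indep, antipode_sum_right' hA hy, counit_antipode_symm]

lemma antipode_symm_sum' (hz : hA.comul a = ∑ i ∈ s, f i ⊗ₜ[K] g i) (y : A) :
    y * (∑ i ∈ s, hA.antipode.symm (g i) * f i) = hA.counit a • y :=
  right_of_left hA (antipode_symm_sum P hz) y

lemma pair_antipode_symm_collapse (hz : hA.comul a = ∑ i ∈ s, f i ⊗ₜ[K] g i) (c : B) :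
    ∑ i ∈ s, P.pair (hA.antipode.symm (g i) * f i) c
      = hA.counit a * hB.counit c := by
  set e := ∑ i ∈ s, hA.antipode.symm (g i) * f i with he
  have hec : ∀ x, e * x = hA.counit a • x := antipode_symm_sum P hz
  have hsum : ∑ i ∈ s, P.pair (hA.antipode.symm (g i) * f i) c = P.pair e c := by
    rw [he]
    have := map_sum (P.pair.flip c) (fun i => hA.antipode.symm (g i) * f i) s
    simpa using this.symm
  rw [hsum]
  obtain ⟨t, c1, c2, hc⟩ := exists_repr (hB.comul c)
  have star : (∑ j ∈ t, P.pair e (c1 j) • c2 j) = hA.counit a • c := by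
    have key : ∀ x : A,
        P.pair x ((∑ j ∈ t, P.pair e (c1 j) • c2 j) - hA.counit a • c) = 0 := by
      intro x
      rw [map_sub, map_sum]
      have h1 : ∑ j ∈ t, P.pair x (P.pair e (c1 j) • c2 j)
          = ∑ j ∈ t, P.pair e (c1 j) * P.pair x (c2 j) := by
        exact Finset.sum_congr rfl fun j _ => by rw [map_smul, smul_eq_mul]
      rw [h1, ← P.pair_mul_comul e x c t c1 c2 hc, hec]
      simp [smul_eq_mul]
    have := P.nondeg_right _ key
    rwa [sub_eq_zero] at this
  have final := congrArg hB.counit star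
  rw [map_sum, map_smul, smul_eq_mul] at final
  have e1 : ∀ j, hB.counit (P.pair e (c1 j) • c2 j)
      = P.pair e (hB.counit (c2 j) • c1 j) := by
    intro j; rw [map_smul, map_smul, smul_eq_mul, smul_eq_mul, mul_comm]
  rw [Finset.sum_congr rfl (fun j _ => e1 j), ← map_sum, counit_right_sum hB hc] at final
  exact final

end Pairing

end HBCAux

namespace HBCAux

section Maps
variable {K : Type} [Field K]
variable {A : Type} [NonUnitalRing A] [Module K A] [SMulCommClass K A A] [IsScalarTower K A A]
variable {B : Type} [NonUnitalRing B] [Module K B] [SMulCommClass K B B] [IsScalarTower K B B]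
variable {hA : RegularMultiplierHopf K A} {hB : RegularMultiplierHopf K B}
variable (P : MHAPairing K A B hA hB)

/-- `lact` as a bilinear map. -/
noncomputable def LactL : B →ₗ[K] A →ₗ[K] A :=
  LinearMap.mk₂ K (fun b a => P.lact b a)
    (fun b b' a => by simp [MHAPairing.lact, map_add, lTensor_add, LinearMap.add_apply])
    (fun c b a => by simp [MHAPairing.lact, map_smul, lTensor_smul, LinearMap.smul_apply])
    (fun b a a' => by simp [MHAPairing.lact, map_add])
    (fun c b a => by simp [MHAPairing.lact, map_smul])

@[simp] lemma LactL_apply (b : B) (a : A) : LactL P b a = P.lact b a := rfl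

noncomputable def RactL : A →ₗ[K] B →ₗ[K] A :=
  LinearMap.mk₂ K (fun a b => P.ract a b)
    (fun a a' b => by simp [MHAPairing.ract, map_add])
    (fun c a b => by simp [MHAPairing.ract, map_smul])
    (fun a b b' => by simp [MHAPairing.ract, map_add, rTensor_add, LinearMap.add_apply])
    (fun c a b => by simp [MHAPairing.ract, map_smul, rTensor_smul, LinearMap.smul_apply])

@[simp] lemma RactL_apply (a : A) (b : B) : RactL P a b = P.ract a b := rfl

noncomputable def RactBL : B →ₗ[K] A →ₗ[K] B :=
  LinearMap.mk₂ K (fun b a => P.ractB b a)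
    (fun b b' a => by simp [MHAPairing.ractB, map_add])
    (fun c b a => by simp [MHAPairing.ractB, map_smul])
    (fun b a a' => by simp [MHAPairing.ractB, map_add, rTensor_add, LinearMap.add_apply])
    (fun c b a => by simp [MHAPairing.ractB, map_smul, rTensor_smul, LinearMap.smul_apply])

@[simp] lemma RactBL_apply (b : B) (a : A) : RactBL P b a = P.ractB b a := rfl

lemma lact_eq {ι : Type} {s : Finset ι} {f g : ι → A} {a : A}
    (hz : hA.comul a = ∑ i ∈ s, f i ⊗ₜ[K] g i) (b : B) :
    P.lact b a = ∑ i ∈ s, P.pair (g i) b • f i := by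
  rw [MHAPairing.lact, hz]
  simp [map_sum]

lemma ractB_eq {ι : Type} {t : Finset ι} {w1 w2 : ι → B} {w : B}
    (hw : hB.comul w = ∑ j ∈ t, w1 j ⊗ₜ[K] w2 j) (z : A) :
    P.ractB w z = ∑ j ∈ t, P.pair z (w1 j) • w2 j := by
  rw [MHAPairing.ractB, hw]
  simp [map_sum]

lemma comul_ractB {ι : Type} {t : Finset ι} {w1 w2 : ι → B} {w : B}
    (hw : hB.comul w = ∑ j ∈ t, w1 j ⊗ₜ[K] w2 j) (z : A) :
    hB.comul (P.ractB w z) = ∑ j ∈ t, (P.ractB (w1 j) z) ⊗ₜ[K] (w2 j) := by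
  choose u p q hp using fun j : ι => exists_repr (K := K) (hB.comul (w1 j))
  choose v c d hd using fun j : ι => exists_repr (K := K) (hB.comul (w2 j))
  set G : B ⊗[K] (B ⊗[K] B) →ₗ[K] B ⊗[K] B :=
    (TensorProduct.lid K (B ⊗[K] B)).toLinearMap ∘ₗ (rTensor (B ⊗[K] B) (P.pair z)) with hG
  have hGapp : ∀ α β γ : B, G (α ⊗ₜ[K] (β ⊗ₜ[K] γ)) = P.pair z α • (β ⊗ₜ[K] γ) := by
    intro α β γ; simp [hG]
  have key := coassoc_sum hB G hw (fun j _ => hp j) (fun j _ => hd j)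
  calc hB.comul (P.ractB w z)
      = ∑ j ∈ t, ∑ k ∈ v j, P.pair z (w1 j) • (c j k ⊗ₜ[K] d j k) := by
        rw [ractB_eq P hw z, map_sum]
        refine Finset.sum_congr rfl fun j _ => ?_
        rw [map_smul, hd j, Finset.smul_sum]
    _ = ∑ j ∈ t, ∑ k ∈ v j, G (w1 j ⊗ₜ[K] (c j k ⊗ₜ[K] d j k)) :=
        Finset.sum_congr rfl fun j _ => Finset.sum_congr rfl fun k _ => (hGapp _ _ _).symm
    _ = ∑ j ∈ t, ∑ k ∈ u j, G (p j k ⊗ₜ[K] (q j k ⊗ₜ[K] w2 j)) := key.symm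
    _ = ∑ j ∈ t, (P.ractB (w1 j) z) ⊗ₜ[K] (w2 j) := by
        refine Finset.sum_congr rfl fun j _ => ?_
        rw [ractB_eq P (hp j) z, sum_tmul]
        exact Finset.sum_congr rfl fun k _ => by simp [hGapp, smul_tmul']

/-- `lact` lifted to the tensor product. -/
noncomputable def LactT : B ⊗[K] A →ₗ[K] A := TensorProduct.lift (LactL P)
noncomputable def RactT : A ⊗[K] B →ₗ[K] A := TensorProduct.lift (RactL P)
noncomputable def RactBT : B ⊗[K] A →ₗ[K] B := TensorProduct.lift (RactBL P)

@[simp] lemma LactT_tmul (b : B) (a : A) : LactT P (b ⊗ₜ[K] a) = P.lact b a := rfl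
@[simp] lemma RactT_tmul (a : A) (b : B) : RactT P (a ⊗ₜ[K] b) = P.ract a b := rfl
@[simp] lemma RactBT_tmul (b : B) (a : A) : RactBT P (b ⊗ₜ[K] a) = P.ractB b a := rfl

/-- The Heisenberg double multiplication. -/
noncomputable def hmulT : (A ⊗[K] B) ⊗[K] (A ⊗[K] B) →ₗ[K] A ⊗[K] B :=
  (TensorProduct.map (LinearMap.mul' K A) (LinearMap.mul' K B))
  ∘ₗ (rTensor (B ⊗[K] B) (lTensor A (LactT P)))
  ∘ₗ ((TensorProduct.assoc K A (B ⊗[K] A) (B ⊗[K] B)).symm).toLinearMap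
  ∘ₗ (lTensor A (TensorProduct.tensorTensorTensorComm K B B A B).toLinearMap)
  ∘ₗ (TensorProduct.assoc K A (B ⊗[K] B) (A ⊗[K] B)).toLinearMap
  ∘ₗ (rTensor (A ⊗[K] B) (lTensor A hB.comul))

lemma hmulT_eq (a a' : A) (b b' : B) {ι : Type} {t : Finset ι} {b1 b2 : ι → B}
    (hb : hB.comul b = ∑ i ∈ t, b1 i ⊗ₜ[K] b2 i) :
    hmulT P ((a ⊗ₜ[K] b) ⊗ₜ[K] (a' ⊗ₜ[K] b'))
      = ∑ i ∈ t, (a * P.lact (b1 i) a') ⊗ₜ[K] ((b2 i) * b') := by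
  simp only [hmulT, coe_comp, Function.comp_apply, rTensor_tmul, lTensor_tmul, hb]
  rw [tmul_sum, sum_tmul, map_sum, map_sum, map_sum, map_sum, map_sum]
  refine Finset.sum_congr rfl fun i _ => ?_
  simp

/-- The coaction `Γ`. -/
noncomputable def GammaT (_P : MHAPairing K A B hA hB) :
    A ⊗[K] B →ₗ[K] (A ⊗[K] B) ⊗[K] (A ⊗[K] B) :=
  (TensorProduct.tensorTensorTensorComm K A A B B).toLinearMap
  ∘ₗ (rTensor (B ⊗[K] B) (TensorProduct.comm K A A).toLinearMap)
  ∘ₗ (TensorProduct.map hA.comul hB.comul)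

lemma GammaT_eq (a : A) (b : B) {ι κ : Type} {s : Finset ι} {t : Finset κ} {a1 a2 : ι → A} {b1 b2 : κ → B}
    (ha : hA.comul a = ∑ i ∈ s, a1 i ⊗ₜ[K] a2 i)
    (hb : hB.comul b = ∑ j ∈ t, b1 j ⊗ₜ[K] b2 j) :
    GammaT P (a ⊗ₜ[K] b)
      = ∑ i ∈ s, ∑ j ∈ t, (a2 i ⊗ₜ[K] b1 j) ⊗ₜ[K] (a1 i ⊗ₜ[K] b2 j) := by
  simp only [GammaT, coe_comp, Function.comp_apply, map_tmul, ha, hb]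
  rw [sum_tmul, map_sum, map_sum]
  refine Finset.sum_congr rfl fun i _ => ?_
  rw [tmul_sum, map_sum, map_sum]
  refine Finset.sum_congr rfl fun j _ => ?_
  simp

end Maps

end HBCAux

namespace HBCAux

section Maps2
variable {K : Type} [Field K]
variable {A : Type} [NonUnitalRing A] [Module K A] [SMulCommClass K A A] [IsScalarTower K A A]
variable {B : Type} [NonUnitalRing B] [Module K B] [SMulCommClass K B B] [IsScalarTower K B B]
variable {hA : RegularMultiplierHopf K A} {hB : RegularMultiplierHopf K B}
variable (P : MHAPairing K A B hA hB)

noncomputable def dmulInner : (B ⊗[K] (B ⊗[K] B)) ⊗[K] (A ⊗[K] B) →ₗ[K] A ⊗[K] (B ⊗[K] B) :=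
  (rTensor (B ⊗[K] B) ((RactT P) ∘ₗ (TensorProduct.map (LactT P) hB.antipode.symm.toLinearMap)))
  ∘ₗ (rTensor (B ⊗[K] B) ((TensorProduct.assoc K B A B).symm.toLinearMap))
  ∘ₗ (rTensor (B ⊗[K] B) (lTensor B (TensorProduct.comm K B A).toLinearMap))
  ∘ₗ (rTensor (B ⊗[K] B) (TensorProduct.assoc K B B A).toLinearMap)
  ∘ₗ (TensorProduct.tensorTensorTensorComm K (B ⊗[K] B) B A B).toLinearMap
  ∘ₗ (rTensor (A ⊗[K] B) ((TensorProduct.assoc K B B B).symm.toLinearMap))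
  ∘ₗ (rTensor (A ⊗[K] B) (lTensor B (TensorProduct.comm K B B).toLinearMap))

noncomputable def dmulT : (A ⊗[K] B) ⊗[K] (A ⊗[K] B) →ₗ[K] A ⊗[K] B :=
  (TensorProduct.map (LinearMap.mul' K A) (LinearMap.mul' K B))
  ∘ₗ ((TensorProduct.assoc K A A (B ⊗[K] B)).symm.toLinearMap)
  ∘ₗ (lTensor A (dmulInner P))
  ∘ₗ (TensorProduct.assoc K A (B ⊗[K] (B ⊗[K] B)) (A ⊗[K] B)).toLinearMap
  ∘ₗ (rTensor (A ⊗[K] B) (lTensor A hB.comul2))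

lemma dmulT_eq (a a' : A) (b b' : B) {ι : Type} {t : Finset ι} {b1 b2 b3 : ι → B}
    (hb : hB.comul2 b = ∑ i ∈ t, b1 i ⊗ₜ[K] (b2 i ⊗ₜ[K] b3 i)) :
    dmulT P ((a ⊗ₜ[K] b) ⊗ₜ[K] (a' ⊗ₜ[K] b'))
      = ∑ i ∈ t,
          (a * P.ract (P.lact (b1 i) a') (hB.antipode.symm (b3 i))) ⊗ₜ[K] ((b2 i) * b') := by
  simp only [dmulT, dmulInner, coe_comp, Function.comp_apply, rTensor_tmul, lTensor_tmul, hb]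
  simp only [tmul_sum, sum_tmul, map_sum]
  refine Finset.sum_congr rfl fun i _ => ?_
  simp

noncomputable def actF1 : (A ⊗[K] (B ⊗[K] A)) ⊗[K] A →ₗ[K] A :=
  (LinearMap.mul' K A)
  ∘ₗ (TensorProduct.map ((LinearMap.mul' K A) ∘ₗ (lTensor A (LactT P)))
      hA.antipode.symm.toLinearMap)

noncomputable def actF2 : ((B ⊗[K] B) ⊗[K] B) ⊗[K] A →ₗ[K] B :=
  (RactBT P)
  ∘ₗ (TensorProduct.map
      ((LinearMap.mul' K B) ∘ₗ (TensorProduct.map (LinearMap.mul' K B) hB.antipode.toLinearMap))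
      hA.antipode.symm.toLinearMap)

noncomputable def actWA (_P : MHAPairing K A B hA hB) :
    B ⊗[K] ((A ⊗[K] A) ⊗[K] A) →ₗ[K] (A ⊗[K] (B ⊗[K] A)) ⊗[K] A :=
  (rTensor A (TensorProduct.comm K (B ⊗[K] A) A).toLinearMap)
  ∘ₗ ((TensorProduct.assoc K (B ⊗[K] A) A A).symm.toLinearMap)
  ∘ₗ (lTensor (B ⊗[K] A) (TensorProduct.comm K A A).toLinearMap)
  ∘ₗ (TensorProduct.tensorTensorTensorComm K B A A A).toLinearMap
  ∘ₗ ((TensorProduct.assoc K B A (A ⊗[K] A)).symm.toLinearMap)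
  ∘ₗ (lTensor B (lTensor A (TensorProduct.comm K A A).toLinearMap))
  ∘ₗ (lTensor B (TensorProduct.assoc K A A A).toLinearMap)

noncomputable def actWB (_P : MHAPairing K A B hA hB) :
    A ⊗[K] ((B ⊗[K] B) ⊗[K] B) →ₗ[K] ((B ⊗[K] B) ⊗[K] B) ⊗[K] A :=
  (rTensor A ((TensorProduct.assoc K B B B).symm.toLinearMap
    ∘ₗ (lTensor B (TensorProduct.comm K B B).toLinearMap)
    ∘ₗ (TensorProduct.assoc K B B B).toLinearMap))
  ∘ₗ (TensorProduct.comm K A ((B ⊗[K] B) ⊗[K] B)).toLinearMap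

noncomputable def actT : (A ⊗[K] B) ⊗[K] (A ⊗[K] B) →ₗ[K] A ⊗[K] B :=
  (TensorProduct.map (actF1 P) (actF2 P))
  ∘ₗ (TensorProduct.map (actWA P) (actWB P))
  ∘ₗ (TensorProduct.tensorTensorTensorComm K B A
      ((A ⊗[K] A) ⊗[K] A) ((B ⊗[K] B) ⊗[K] B)).toLinearMap
  ∘ₗ (rTensor (((A ⊗[K] A) ⊗[K] A) ⊗[K] ((B ⊗[K] B) ⊗[K] B))
      (TensorProduct.comm K A B).toLinearMap)
  ∘ₗ (TensorProduct.tensorTensorTensorComm K A ((A ⊗[K] A) ⊗[K] A) B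
      ((B ⊗[K] B) ⊗[K] B)).toLinearMap
  ∘ₗ (TensorProduct.tensorTensorTensorComm K A B ((A ⊗[K] A) ⊗[K] A)
      ((B ⊗[K] B) ⊗[K] B)).toLinearMap
  ∘ₗ (lTensor (A ⊗[K] B)
      (TensorProduct.tensorTensorTensorComm K (A ⊗[K] A) (B ⊗[K] B) A B).toLinearMap)
  ∘ₗ (TensorProduct.assoc K (A ⊗[K] B) ((A ⊗[K] A) ⊗[K] (B ⊗[K] B)) (A ⊗[K] B)).toLinearMap
  ∘ₗ (rTensor (A ⊗[K] B)
      (TensorProduct.tensorTensorTensorComm K A (A ⊗[K] A) B (B ⊗[K] B)).toLinearMap)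
  ∘ₗ (rTensor (A ⊗[K] B) (TensorProduct.map hA.comul2 hB.comul2))

lemma actT_eq (a a' : A) (b b' : B) {ι κ : Type} {s : Finset ι} {t : Finset κ} {a1 a2 a3 : ι → A} {b1 b2 b3 : κ → B}
    (hca : hA.comul2 a = ∑ i ∈ s, a1 i ⊗ₜ[K] (a2 i ⊗ₜ[K] a3 i))
    (hcb : hB.comul2 b = ∑ j ∈ t, b1 j ⊗ₜ[K] (b2 j ⊗ₜ[K] b3 j)) :
    actT P ((a ⊗ₜ[K] b) ⊗ₜ[K] (a' ⊗ₜ[K] b'))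
      = ∑ i ∈ s, ∑ j ∈ t,
          (a3 i * P.lact (b1 j) a' * hA.antipode.symm (a2 i)) ⊗ₜ[K]
            (P.ractB ((b2 j) * b' * hB.antipode (b3 j)) (hA.antipode.symm (a1 i))) := by
  simp only [actT, actWA, actWB, actF1, actF2, coe_comp, Function.comp_apply,
    rTensor_tmul, lTensor_tmul, map_tmul, hca, hcb]
  simp only [tmul_sum, sum_tmul, map_sum]
  rw [Finset.sum_comm]
  refine Finset.sum_congr rfl fun i _ => Finset.sum_congr rfl fun j _ => ?_
  simp [mul_assoc]

set_option maxHeartbeats 1000000 in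
lemma actT_eq' (a a' : A) (b b' : B) {ι₁ ι₂ κ₁ κ₂ : Type} {s : Finset ι₁} {u : ι₁ → Finset ι₂}
    {t : Finset κ₁} {v : κ₁ → Finset κ₂}
    {a1 : ι₁ → A} {a2 a3 : ι₁ → ι₂ → A} {b1 : κ₁ → B} {b2 b3 : κ₁ → κ₂ → B}
    (hca : hA.comul2 a = ∑ i ∈ s, ∑ k ∈ u i, a1 i ⊗ₜ[K] (a2 i k ⊗ₜ[K] a3 i k))
    (hcb : hB.comul2 b = ∑ j ∈ t, ∑ l ∈ v j, b1 j ⊗ₜ[K] (b2 j l ⊗ₜ[K] b3 j l)) :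
    actT P ((a ⊗ₜ[K] b) ⊗ₜ[K] (a' ⊗ₜ[K] b'))
      = ∑ j ∈ t, ∑ l ∈ v j, ∑ i ∈ s, ∑ k ∈ u i,
          (a3 i k * P.lact (b1 j) a' * hA.antipode.symm (a2 i k)) ⊗ₜ[K]
            (P.ractB ((b2 j l) * b' * hB.antipode (b3 j l)) (hA.antipode.symm (a1 i))) := by
  simp only [actT, actWA, actWB, actF1, actF2, coe_comp, Function.comp_apply,
    rTensor_tmul, lTensor_tmul, map_tmul, hca, hcb]
  simp only [tmul_sum, sum_tmul, map_sum]
  refine Finset.sum_congr rfl fun j _ => Finset.sum_congr rfl fun l _ =>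
    Finset.sum_congr rfl fun i _ => Finset.sum_congr rfl fun k _ => ?_
  simp [mul_assoc]

end Maps2

end HBCAux

namespace HBCAux

section Generic3
variable {K : Type} [Field K]
variable {A : Type} [NonUnitalRing A] [Module K A] [SMulCommClass K A A] [IsScalarTower K A A]
variable (h : RegularMultiplierHopf K A)

lemma comul2_eq {ι κ : Type} {s : Finset ι} {f g : ι → A} {a : A}
    (hz : h.comul a = ∑ i ∈ s, f i ⊗ₜ[K] g i)
    {u : ι → Finset κ} {g1 g2 : ι → κ → A}
    (hg : ∀ i ∈ s, h.comul (g i) = ∑ j ∈ u i, g1 i j ⊗ₜ[K] g2 i j) :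
    h.comul2 a = ∑ i ∈ s, ∑ j ∈ u i, f i ⊗ₜ[K] (g1 i j ⊗ₜ[K] g2 i j) := by
  rw [RegularMultiplierHopf.comul2, coe_comp, Function.comp_apply, hz, map_sum]
  refine Finset.sum_congr rfl fun i hi => ?_
  rw [lTensor_tmul, hg i hi, tmul_sum]

lemma comul_mul3_sum {ι κ μ : Type} {s : Finset ι} {t : Finset κ} {r : Finset μ}
    {f g : ι → A} {f' g' : κ → A} {f'' g'' : μ → A} {a b c : A}
    (hza : h.comul a = ∑ i ∈ s, f i ⊗ₜ[K] g i)
    (hzb : h.comul b = ∑ j ∈ t, f' j ⊗ₜ[K] g' j)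
    (hzc : h.comul c = ∑ l ∈ r, f'' l ⊗ₜ[K] g'' l) :
    h.comul (a * b * c) = ∑ i ∈ s, ∑ j ∈ t, ∑ l ∈ r,
      (f i * f' j * f'' l) ⊗ₜ[K] (g i * g' j * g'' l) := by
  rw [h.comul_mul, h.comul_mul, hza, hzb, hzc]
  simp only [Finset.sum_mul, Finset.mul_sum, Algebra.TensorProduct.tmul_mul_tmul]
  calc ∑ l ∈ r, ∑ j ∈ t, ∑ i ∈ s, (f i * f' j * f'' l) ⊗ₜ[K] (g i * g' j * g'' l)
      = ∑ j ∈ t, ∑ l ∈ r, ∑ i ∈ s, (f i * f' j * f'' l) ⊗ₜ[K] (g i * g' j * g'' l) :=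
        Finset.sum_comm
    _ = ∑ j ∈ t, ∑ i ∈ s, ∑ l ∈ r, (f i * f' j * f'' l) ⊗ₜ[K] (g i * g' j * g'' l) :=
        Finset.sum_congr rfl fun _ _ => Finset.sum_comm
    _ = ∑ i ∈ s, ∑ j ∈ t, ∑ l ∈ r, (f i * f' j * f'' l) ⊗ₜ[K] (g i * g' j * g'' l) :=
        Finset.sum_comm

end Generic3

section SubA
variable {K : Type} [Field K]
variable {A : Type} [NonUnitalRing A] [Module K A] [SMulCommClass K A A] [IsScalarTower K A A]
variable {B : Type} [NonUnitalRing B] [Module K B] [SMulCommClass K B B] [IsScalarTower K B B]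
variable {hA : RegularMultiplierHopf K A} {hB : RegularMultiplierHopf K B}
variable (P : MHAPairing K A B hA hB)

set_option maxHeartbeats 1600000 in
lemma sublemmaA (c : A) (v : B) {a' : A} {w : B}
    {ι : Type} {sD : Finset ι} {u x : ι → A}
    (hu : hA.comul a' = ∑ i ∈ sD, u i ⊗ₜ[K] x i)
    {κ : Type} {sX : ι → Finset κ} {x1 x2 : ι → κ → A}
    (hx : ∀ i ∈ sD, hA.comul (x i) = ∑ k ∈ sX i, x1 i k ⊗ₜ[K] x2 i k)
    {μ : Type} {sX2 : ι → κ → Finset μ} {x21 x22 : ι → κ → μ → A}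
    (hx2 : ∀ i ∈ sD, ∀ k ∈ sX i,
      hA.comul (x2 i k) = ∑ l ∈ sX2 i k, x21 i k l ⊗ₜ[K] x22 i k l)
    {ν : Type} {sW : Finset ν} {w1 w2 : ν → B}
    (hw : hB.comul w = ∑ p ∈ sW, w1 p ⊗ₜ[K] w2 p) :
    ∑ i ∈ sD, ∑ k ∈ sX i, ∑ l ∈ sX2 i k, ∑ p ∈ sW,
      (x22 i k l * c * hA.antipode.symm (x21 i k l)
        * P.lact (P.ractB (w1 p) (hA.antipode.symm (x1 i k))) (u i)) ⊗ₜ[K] ((w2 p) * v)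
    = (a' * c) ⊗ₜ[K] (w * v) := by
  classical
  -- choices of further expansions
  choose sU u1 u2 hU using fun i : ι => exists_repr (K := K) (hA.comul (u i))
  choose sW1 w11 w12 hW1 using fun p : ν => exists_repr (K := K) (hB.comul (w1 p))
  -- the `W`-bilinear form
  set Wb : A →ₗ[K] A →ₗ[K] A ⊗[K] B :=
    ∑ p ∈ sW, LinearMap.smulRight (P.pair.flip (w1 p))
      ((TensorProduct.mk K A B).flip (w2 p * v)) with hWbdef
  have hWb : ∀ ζ m : A, Wb ζ m = ∑ p ∈ sW, P.pair ζ (w1 p) • (m ⊗ₜ[K] (w2 p * v)) := by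
    intro ζ m
    rw [hWbdef, LinearMap.coe_sum, Finset.sum_apply, LinearMap.coe_sum, Finset.sum_apply]
    refine Finset.sum_congr rfl fun p _ => ?_
    simp
  -- Step 1 : expand the action and contract the pairings along `w1 p`.
  have step1 : ∑ i ∈ sD, ∑ k ∈ sX i, ∑ l ∈ sX2 i k, ∑ p ∈ sW,
      (x22 i k l * c * hA.antipode.symm (x21 i k l)
        * P.lact (P.ractB (w1 p) (hA.antipode.symm (x1 i k))) (u i)) ⊗ₜ[K] ((w2 p) * v)
      = ∑ i ∈ sD, ∑ k ∈ sX i, ∑ l ∈ sX2 i k, ∑ r ∈ sU i,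
          Wb (hA.antipode.symm (x1 i k) * u2 i r)
            (x22 i k l * c * hA.antipode.symm (x21 i k l) * u1 i r) := by
    refine Finset.sum_congr rfl fun i _ => Finset.sum_congr rfl fun k _ =>
      Finset.sum_congr rfl fun l _ => ?_
    set X := x22 i k l * c * hA.antipode.symm (x21 i k l) with hX
    set Z := hA.antipode.symm (x1 i k) with hZ
    have e1 : ∀ p, P.lact (P.ractB (w1 p) Z) (u i)
        = ∑ q ∈ sW1 p, ∑ r ∈ sU i,
            (P.pair Z (w11 p q) * P.pair (u2 i r) (w12 p q)) • u1 i r := by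
      intro p
      rw [ractB_eq P (hW1 p) Z]
      have : P.lact (∑ q ∈ sW1 p, P.pair Z (w11 p q) • w12 p q) (u i)
          = ∑ q ∈ sW1 p, P.pair Z (w11 p q) • P.lact (w12 p q) (u i) := by
        rw [← LactL_apply, map_sum, LinearMap.coe_sum, Finset.sum_apply]
        exact Finset.sum_congr rfl fun q _ => by rw [map_smul]; simp
      rw [this]
      refine Finset.sum_congr rfl fun q _ => ?_
      rw [lact_eq P (hU i) (w12 p q), Finset.smul_sum]
      exact Finset.sum_congr rfl fun r _ => by rw [smul_smul]
    calc ∑ p ∈ sW, (X * P.lact (P.ractB (w1 p) Z) (u i)) ⊗ₜ[K] ((w2 p) * v)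
        = ∑ p ∈ sW, ∑ q ∈ sW1 p, ∑ r ∈ sU i,
            (P.pair Z (w11 p q) * P.pair (u2 i r) (w12 p q))
              • ((X * u1 i r) ⊗ₜ[K] ((w2 p) * v)) := by
          refine Finset.sum_congr rfl fun p _ => ?_
          rw [e1 p, Finset.mul_sum, sum_tmul]
          refine Finset.sum_congr rfl fun q _ => ?_
          rw [Finset.mul_sum, sum_tmul]
          refine Finset.sum_congr rfl fun r _ => ?_
          rw [mul_smul_comm, smul_tmul']
      _ = ∑ p ∈ sW, ∑ r ∈ sU i, ∑ q ∈ sW1 p,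
            (P.pair Z (w11 p q) * P.pair (u2 i r) (w12 p q))
              • ((X * u1 i r) ⊗ₜ[K] ((w2 p) * v)) := by
          exact Finset.sum_congr rfl fun p _ => Finset.sum_comm
      _ = ∑ r ∈ sU i, ∑ p ∈ sW,
            P.pair (Z * u2 i r) (w1 p) • ((X * u1 i r) ⊗ₜ[K] ((w2 p) * v)) := by
          rw [Finset.sum_comm]
          refine Finset.sum_congr rfl fun r _ => Finset.sum_congr rfl fun p _ => ?_
          rw [← Finset.sum_smul, ← pair_mul_comul' P (hW1 p) Z (u2 i r)]
      _ = ∑ r ∈ sU i, Wb (Z * u2 i r) (X * u1 i r) := by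
          exact Finset.sum_congr rfl fun r _ => (hWb _ _).symm
  rw [step1]
  -- further choices
  choose sX1 x11 x12 hX1 using fun (i : ι) (k : κ) => exists_repr (K := K) (hA.comul (x1 i k))
  choose sX22 x221 x222 hX22 using
    fun (i : ι) (k : κ) (l : μ) => exists_repr (K := K) (hA.comul (x22 i k l))
  -- the composite `G₂` used for the top-level coassociativity move
  set M1 : A ⊗[K] A →ₗ[K] A :=
    (LinearMap.mul' K A) ∘ₗ (rTensor A hA.antipode.symm.toLinearMap) with hM1
  set M2 : (A ⊗[K] A) ⊗[K] A →ₗ[K] A :=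
    (LinearMap.mul' K A) ∘ₗ (rTensor A ((LinearMap.mul' K A)
      ∘ₗ (TensorProduct.map (mulRight K c) hA.antipode.symm.toLinearMap))) with hM2
  set shuffle : A ⊗[K] (A ⊗[K] (A ⊗[K] (A ⊗[K] A))) →ₗ[K]
      (A ⊗[K] A) ⊗[K] ((A ⊗[K] A) ⊗[K] A) :=
    (TensorProduct.assoc K (A ⊗[K] A) (A ⊗[K] A) A).toLinearMap
    ∘ₗ (TensorProduct.comm K A ((A ⊗[K] A) ⊗[K] (A ⊗[K] A))).toLinearMap
    ∘ₗ (lTensor A (rTensor (A ⊗[K] A) (TensorProduct.comm K A A).toLinearMap))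
    ∘ₗ (lTensor A ((TensorProduct.assoc K A A (A ⊗[K] A)).symm.toLinearMap))
    ∘ₗ (lTensor A (lTensor A (lTensor A (TensorProduct.comm K A A).toLinearMap))) with hshuffle
  set G₂ : A ⊗[K] (A ⊗[K] A) →ₗ[K] A ⊗[K] B :=
    (TensorProduct.lift Wb) ∘ₗ (TensorProduct.map M1 M2) ∘ₗ shuffle
      ∘ₗ (lTensor A (lTensor A hA.comul2)) with hG₂def
  have hG₂ : ∀ (p q γ : A) {κ' μ' : Type} {sk : Finset κ'} {sl : κ' → Finset μ'}
      {y1 : κ' → A} {y21 y22 : κ' → μ' → A},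
      (hA.comul2 γ = ∑ k ∈ sk, ∑ l ∈ sl k, y1 k ⊗ₜ[K] (y21 k l ⊗ₜ[K] y22 k l)) →
      G₂ (p ⊗ₜ[K] (q ⊗ₜ[K] γ)) = ∑ k ∈ sk, ∑ l ∈ sl k,
        Wb (hA.antipode.symm (y1 k) * q) (y22 k l * c * hA.antipode.symm (y21 k l) * p) := by
    intro p q γ κ' μ' sk sl y1 y21 y22 hγ
    simp only [hG₂def, hshuffle, hM1, hM2, coe_comp, Function.comp_apply,
      lTensor_tmul, hγ]
    simp only [tmul_sum, sum_tmul, map_sum]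
    refine Finset.sum_congr rfl fun k _ => Finset.sum_congr rfl fun l _ => ?_
    simp [mul_assoc]
  -- Step 2 : fold into `G₂`
  have step2 : ∑ i ∈ sD, ∑ k ∈ sX i, ∑ l ∈ sX2 i k, ∑ r ∈ sU i,
      Wb (hA.antipode.symm (x1 i k) * u2 i r)
        (x22 i k l * c * hA.antipode.symm (x21 i k l) * u1 i r)
      = ∑ i ∈ sD, ∑ r ∈ sU i, G₂ (u1 i r ⊗ₜ[K] (u2 i r ⊗ₜ[K] x i)) := by
    refine Finset.sum_congr rfl fun i hi => ?_
    rw [show ∑ k ∈ sX i, ∑ l ∈ sX2 i k, ∑ r ∈ sU i,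
        Wb (hA.antipode.symm (x1 i k) * u2 i r)
          (x22 i k l * c * hA.antipode.symm (x21 i k l) * u1 i r)
        = ∑ r ∈ sU i, ∑ k ∈ sX i, ∑ l ∈ sX2 i k,
        Wb (hA.antipode.symm (x1 i k) * u2 i r)
          (x22 i k l * c * hA.antipode.symm (x21 i k l) * u1 i r) from by
      rw [Finset.sum_comm]
      exact Finset.sum_congr rfl fun k _ => Finset.sum_comm]
    refine Finset.sum_congr rfl fun r _ => ?_
    rw [hG₂ (u1 i r) (u2 i r) (x i) (comul2_eq hA (hx i hi) (fun k hk => hx2 i hi k hk))]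
  rw [step2]
  -- Step 3 : the top-level coassociativity move
  rw [coassoc_sum hA G₂ hu (fun i _ => hU i) hx]
  -- Step 4 : evaluate `G₂` and reshuffle within the `x`-subtree
  have step4 : ∑ i ∈ sD, ∑ k ∈ sX i, G₂ (u i ⊗ₜ[K] (x1 i k ⊗ₜ[K] x2 i k))
      = ∑ i ∈ sD, ∑ k ∈ sX i, ∑ l₃ ∈ sX1 i k, ∑ l ∈ sX2 i k,
          Wb (hA.antipode.symm (x12 i k l₃) * x11 i k l₃)
            (x22 i k l * c * hA.antipode.symm (x21 i k l) * u i) := by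
    refine Finset.sum_congr rfl fun i hi => ?_
    -- G₃ : the inner-subtree composite (depends on `u i`)
    set G₃ : A ⊗[K] (A ⊗[K] A) →ₗ[K] A ⊗[K] B :=
      (TensorProduct.lift Wb)
      ∘ₗ (TensorProduct.map ((LinearMap.mul' K A) ∘ₗ (rTensor A hA.antipode.symm.toLinearMap))
          ((mulRight K (u i)) ∘ₗ (LinearMap.mul' K A)
            ∘ₗ (TensorProduct.map (mulRight K c) hA.antipode.symm.toLinearMap)))
      ∘ₗ (rTensor (A ⊗[K] A) (TensorProduct.comm K A A).toLinearMap)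
      ∘ₗ ((TensorProduct.assoc K A A (A ⊗[K] A)).symm.toLinearMap)
      ∘ₗ (lTensor A (lTensor A (TensorProduct.comm K A A).toLinearMap))
      ∘ₗ (lTensor A (lTensor A hA.comul)) with hG₃def
    have hG₃ : ∀ (α β γ : A) {μ' : Type} {sl : Finset μ'} {y1 y2 : μ' → A},
        (hA.comul γ = ∑ l ∈ sl, y1 l ⊗ₜ[K] y2 l) →
        G₃ (α ⊗ₜ[K] (β ⊗ₜ[K] γ)) = ∑ l ∈ sl,
          Wb (hA.antipode.symm β * α) (y2 l * c * hA.antipode.symm (y1 l) * u i) := by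
      intro α β γ μ' sl y1 y2 hγ
      simp only [hG₃def, coe_comp, Function.comp_apply, lTensor_tmul, hγ]
      simp only [tmul_sum, sum_tmul, map_sum]
      refine Finset.sum_congr rfl fun l _ => ?_
      simp [mul_assoc]
    calc ∑ k ∈ sX i, G₂ (u i ⊗ₜ[K] (x1 i k ⊗ₜ[K] x2 i k))
        = ∑ k ∈ sX i, ∑ l ∈ sX2 i k, G₃ (x1 i k ⊗ₜ[K] (x21 i k l ⊗ₜ[K] x22 i k l)) := by
          refine Finset.sum_congr rfl fun k hk => ?_
          rw [hG₂ (u i) (x1 i k) (x2 i k)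
            (comul2_eq hA (hx2 i hi k hk) (fun l _ => hX22 i k l))]
          refine Finset.sum_congr rfl fun l hl => ?_
          rw [hG₃ (x1 i k) (x21 i k l) (x22 i k l) (hX22 i k l)]
      _ = ∑ k ∈ sX i, ∑ l₃ ∈ sX1 i k, G₃ (x11 i k l₃ ⊗ₜ[K] (x12 i k l₃ ⊗ₜ[K] x2 i k)) :=
          (coassoc_sum hA G₃ (hx i hi) (fun k _ => hX1 i k) (hx2 i hi)).symm
      _ = ∑ k ∈ sX i, ∑ l₃ ∈ sX1 i k, ∑ l ∈ sX2 i k,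
            Wb (hA.antipode.symm (x12 i k l₃) * x11 i k l₃)
              (x22 i k l * c * hA.antipode.symm (x21 i k l) * u i) := by
          refine Finset.sum_congr rfl fun k hk => Finset.sum_congr rfl fun l₃ _ => ?_
          rw [hG₃ (x11 i k l₃) (x12 i k l₃) (x2 i k) (hx2 i hi k hk)]
  rw [step4]
  -- Step 5 : the pairing collapse (PB2) and the `w`-counit collapse
  have step5 : ∑ i ∈ sD, ∑ k ∈ sX i, ∑ l₃ ∈ sX1 i k, ∑ l ∈ sX2 i k,
      Wb (hA.antipode.symm (x12 i k l₃) * x11 i k l₃)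
        (x22 i k l * c * hA.antipode.symm (x21 i k l) * u i)
      = ∑ i ∈ sD, ∑ k ∈ sX i, hA.counit (x1 i k) •
          ((∑ l ∈ sX2 i k, (x22 i k l * c * hA.antipode.symm (x21 i k l) * u i))
            ⊗ₜ[K] (w * v)) := by
    refine Finset.sum_congr rfl fun i _ => Finset.sum_congr rfl fun k _ => ?_
    rw [Finset.sum_comm]
    rw [show ∑ l ∈ sX2 i k, ∑ l₃ ∈ sX1 i k,
        Wb (hA.antipode.symm (x12 i k l₃) * x11 i k l₃)
          (x22 i k l * c * hA.antipode.symm (x21 i k l) * u i)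
      = ∑ l ∈ sX2 i k, hA.counit (x1 i k) •
          ((x22 i k l * c * hA.antipode.symm (x21 i k l) * u i) ⊗ₜ[K] (w * v)) from ?_]
    · rw [← Finset.smul_sum, ← sum_tmul]
    · refine Finset.sum_congr rfl fun l _ => ?_
      set m := x22 i k l * c * hA.antipode.symm (x21 i k l) * u i with hm
      have e2 : ∑ p ∈ sW, hB.counit (w1 p) • (w2 p * v) = w * v := by
        calc ∑ p ∈ sW, hB.counit (w1 p) • (w2 p * v)
            = (∑ p ∈ sW, hB.counit (w1 p) • w2 p) * v := by
              rw [Finset.sum_mul]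
              exact Finset.sum_congr rfl fun p _ => (smul_mul_assoc _ _ _).symm
          _ = w * v := by rw [counit_left_sum hB hw]
      calc ∑ l₃ ∈ sX1 i k, Wb (hA.antipode.symm (x12 i k l₃) * x11 i k l₃) m
          = ∑ l₃ ∈ sX1 i k, ∑ p ∈ sW,
              P.pair (hA.antipode.symm (x12 i k l₃) * x11 i k l₃) (w1 p)
                • (m ⊗ₜ[K] (w2 p * v)) :=
            Finset.sum_congr rfl fun l₃ _ => hWb _ m
        _ = ∑ p ∈ sW, (∑ l₃ ∈ sX1 i k,
              P.pair (hA.antipode.symm (x12 i k l₃) * x11 i k l₃) (w1 p))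
                • (m ⊗ₜ[K] (w2 p * v)) := by
            rw [Finset.sum_comm]
            exact Finset.sum_congr rfl fun p _ => (Finset.sum_smul).symm
        _ = ∑ p ∈ sW, (hA.counit (x1 i k) * hB.counit (w1 p)) • (m ⊗ₜ[K] (w2 p * v)) := by
            refine Finset.sum_congr rfl fun p _ => ?_
            rw [pair_antipode_symm_collapse P (hX1 i k) (w1 p)]
        _ = hA.counit (x1 i k) • (m ⊗ₜ[K] (w * v)) := by
            rw [show ∀ z, hA.counit (x1 i k) • (m ⊗ₜ[K] z) = hA.counit (x1 i k) • (m ⊗ₜ[K] z)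
              from fun z => rfl]
            have : ∑ p ∈ sW, (hA.counit (x1 i k) * hB.counit (w1 p)) • (m ⊗ₜ[K] (w2 p * v))
                = hA.counit (x1 i k) • ∑ p ∈ sW, hB.counit (w1 p) • (m ⊗ₜ[K] (w2 p * v)) := by
              rw [Finset.smul_sum]
              exact Finset.sum_congr rfl fun p _ => mul_smul _ _ _
            rw [this]
            congr 1
            calc ∑ p ∈ sW, hB.counit (w1 p) • (m ⊗ₜ[K] (w2 p * v))
                = m ⊗ₜ[K] (∑ p ∈ sW, hB.counit (w1 p) • (w2 p * v)) := by
                  rw [tmul_sum]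
                  exact Finset.sum_congr rfl fun p _ => (tmul_smul _ _ _).symm
              _ = m ⊗ₜ[K] (w * v) := by rw [e2]
  rw [step5]
  -- Step 7 : absorb the counit of `x1` back into the `x`-subtree
  have step7 : ∀ i ∈ sD, ∑ k ∈ sX i, hA.counit (x1 i k) •
      ((∑ l ∈ sX2 i k, (x22 i k l * c * hA.antipode.symm (x21 i k l) * u i))
        ⊗ₜ[K] (w * v))
      = ∑ k ∈ sX i, (x2 i k * c * hA.antipode.symm (x1 i k) * u i) ⊗ₜ[K] (w * v) := by
    intro i hi
    set Ξ : A →ₗ[K] A ⊗[K] B :=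
      ((TensorProduct.mk K A B).flip (w * v)) ∘ₗ (mulRight K (u i)) ∘ₗ (LinearMap.mul' K A)
        ∘ₗ (TensorProduct.map (mulRight K c) hA.antipode.symm.toLinearMap)
        ∘ₗ (TensorProduct.comm K A A).toLinearMap ∘ₗ hA.comul with hΞdef
    have hΞ : ∀ (γ : A) {μ' : Type} {sl : Finset μ'} {y1 y2 : μ' → A},
        hA.comul γ = ∑ l ∈ sl, y1 l ⊗ₜ[K] y2 l →
        Ξ γ = ∑ l ∈ sl, (y2 l * c * hA.antipode.symm (y1 l) * u i) ⊗ₜ[K] (w * v) := by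
      intro γ μ' sl y1 y2 hγ
      simp only [hΞdef, coe_comp, Function.comp_apply, hγ, map_sum]
      refine Finset.sum_congr rfl fun l _ => ?_
      simp [mul_assoc]
    calc ∑ k ∈ sX i, hA.counit (x1 i k) •
        ((∑ l ∈ sX2 i k, (x22 i k l * c * hA.antipode.symm (x21 i k l) * u i))
          ⊗ₜ[K] (w * v))
        = ∑ k ∈ sX i, hA.counit (x1 i k) • Ξ (x2 i k) := by
          refine Finset.sum_congr rfl fun k hk => ?_
          rw [hΞ (x2 i k) (hx2 i hi k hk), ← sum_tmul]
      _ = Ξ (∑ k ∈ sX i, hA.counit (x1 i k) • x2 i k) := by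
          rw [map_sum]
          exact Finset.sum_congr rfl fun k _ => (map_smul Ξ _ _).symm
      _ = Ξ (x i) := by rw [counit_left_sum hA (hx i hi)]
      _ = ∑ k ∈ sX i, (x2 i k * c * hA.antipode.symm (x1 i k) * u i) ⊗ₜ[K] (w * v) :=
          hΞ (x i) (hx i hi)
  rw [Finset.sum_congr rfl step7]
  -- Step 8 : the final top-level coassociativity move
  set G₅ : A ⊗[K] (A ⊗[K] A) →ₗ[K] A ⊗[K] B :=
    ((TensorProduct.mk K A B).flip (w * v)) ∘ₗ (LinearMap.mul' K A)
      ∘ₗ (rTensor A ((LinearMap.mul' K A)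
        ∘ₗ (TensorProduct.map (mulRight K c) hA.antipode.symm.toLinearMap)))
      ∘ₗ (rTensor A (TensorProduct.comm K A A).toLinearMap)
      ∘ₗ (TensorProduct.comm K A (A ⊗[K] A)).toLinearMap with hG₅def
  have hG₅ : ∀ p q γ : A, G₅ (p ⊗ₜ[K] (q ⊗ₜ[K] γ))
      = (γ * c * hA.antipode.symm q * p) ⊗ₜ[K] (w * v) := by
    intro p q γ
    simp [hG₅def, mul_assoc]
  have step8 : ∑ i ∈ sD, ∑ k ∈ sX i,
      (x2 i k * c * hA.antipode.symm (x1 i k) * u i) ⊗ₜ[K] (w * v)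
      = ∑ i ∈ sD, ∑ r ∈ sU i,
        (x i * c * hA.antipode.symm (u2 i r) * u1 i r) ⊗ₜ[K] (w * v) := by
    calc ∑ i ∈ sD, ∑ k ∈ sX i,
        (x2 i k * c * hA.antipode.symm (x1 i k) * u i) ⊗ₜ[K] (w * v)
        = ∑ i ∈ sD, ∑ k ∈ sX i, G₅ (u i ⊗ₜ[K] (x1 i k ⊗ₜ[K] x2 i k)) :=
          Finset.sum_congr rfl fun i _ => Finset.sum_congr rfl fun k _ => (hG₅ _ _ _).symm
      _ = ∑ i ∈ sD, ∑ r ∈ sU i, G₅ (u1 i r ⊗ₜ[K] (u2 i r ⊗ₜ[K] x i)) :=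
          (coassoc_sum hA G₅ hu (fun i _ => hU i) hx).symm
      _ = ∑ i ∈ sD, ∑ r ∈ sU i,
            (x i * c * hA.antipode.symm (u2 i r) * u1 i r) ⊗ₜ[K] (w * v) :=
          Finset.sum_congr rfl fun i _ => Finset.sum_congr rfl fun r _ => hG₅ _ _ _
  rw [step8]
  -- Step 9 : final collapse
  calc ∑ i ∈ sD, ∑ r ∈ sU i,
      (x i * c * hA.antipode.symm (u2 i r) * u1 i r) ⊗ₜ[K] (w * v)
      = ∑ i ∈ sD, (hA.counit (u i) • (x i * c)) ⊗ₜ[K] (w * v) := by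
        refine Finset.sum_congr rfl fun i _ => ?_
        rw [← sum_tmul]
        congr 1
        calc ∑ r ∈ sU i, x i * c * hA.antipode.symm (u2 i r) * u1 i r
            = (x i * c) * (∑ r ∈ sU i, hA.antipode.symm (u2 i r) * u1 i r) := by
              rw [Finset.mul_sum]
              exact Finset.sum_congr rfl fun r _ => by rw [mul_assoc]
          _ = hA.counit (u i) • (x i * c) := antipode_symm_sum' P (hU i) _
    _ = (a' * c) ⊗ₜ[K] (w * v) := by
        rw [← sum_tmul]
        congr 1
        calc ∑ i ∈ sD, hA.counit (u i) • (x i * c)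
            = (∑ i ∈ sD, hA.counit (u i) • x i) * c := by
              rw [Finset.sum_mul]
              exact Finset.sum_congr rfl fun i _ => (smul_mul_assoc _ _ _).symm
          _ = a' * c := by rw [counit_left_sum hA hu]

end SubA

end HBCAux

namespace HBCAux

section SubB
variable {K : Type} [Field K]
variable {A : Type} [NonUnitalRing A] [Module K A] [SMulCommClass K A A] [IsScalarTower K A A]
variable {B : Type} [NonUnitalRing B] [Module K B] [SMulCommClass K B B] [IsScalarTower K B B]
variable {hA : RegularMultiplierHopf K A} {hB : RegularMultiplierHopf K B}
variable (P : MHAPairing K A B hA hB)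

set_option maxHeartbeats 1600000 in
lemma sublemmaB (a' aa : A) (bb : B) {b' : B}
    {ι : Type} {sE : Finset ι} {y vv : ι → B}
    (hy : hB.comul b' = ∑ j ∈ sE, y j ⊗ₜ[K] vv j)
    {κ : Type} {sY : ι → Finset κ} {y1 y2 : ι → κ → B}
    (hy1 : ∀ j ∈ sE, hB.comul (y j) = ∑ m ∈ sY j, y1 j m ⊗ₜ[K] y2 j m)
    {μ : Type} {sY2 : ι → κ → Finset μ} {y21 y22 : ι → κ → μ → B}
    (hy2 : ∀ j ∈ sE, ∀ m ∈ sY j,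
      hB.comul (y2 j m) = ∑ n ∈ sY2 j m, y21 j m n ⊗ₜ[K] y22 j m n) :
    ∑ j ∈ sE, ∑ m ∈ sY j, ∑ n ∈ sY2 j m,
      (a' * P.lact (y1 j m) aa) ⊗ₜ[K] ((y21 j m n * bb * hB.antipode (y22 j m n)) * vv j)
    = ∑ j ∈ sE, (a' * P.lact (y j) aa) ⊗ₜ[K] ((vv j) * bb) := by
  classical
  choose sQ q1 q2 hQ using fun (j : ι) (m : κ) => exists_repr (K := K) (hB.comul (y1 j m))
  choose sVV vv1 vv2 hVV using fun j : ι => exists_repr (K := K) (hB.comul (vv j))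
  set NA : B →ₗ[K] A := (mulLeft K a') ∘ₗ ((LactL P).flip aa) with hNA
  set G₂B : B ⊗[K] (B ⊗[K] B) →ₗ[K] A ⊗[K] B :=
    (TensorProduct.map NA
      ((LinearMap.mul' K B)
        ∘ₗ (rTensor B ((LinearMap.mul' K B)
          ∘ₗ (TensorProduct.map (mulRight K bb) hB.antipode.toLinearMap)))
        ∘ₗ ((TensorProduct.assoc K B B B).symm.toLinearMap)))
    ∘ₗ (TensorProduct.assoc K B B (B ⊗[K] B)).toLinearMap
    ∘ₗ (rTensor (B ⊗[K] B) hB.comul) with hG₂Bdef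
  have hG₂B : ∀ (α β γ : B) {μ' : Type} {sl : Finset μ'} {r1 r2 : μ' → B},
      hB.comul α = ∑ l ∈ sl, r1 l ⊗ₜ[K] r2 l →
      G₂B (α ⊗ₜ[K] (β ⊗ₜ[K] γ)) = ∑ l ∈ sl,
        (a' * P.lact (r1 l) aa) ⊗ₜ[K] ((r2 l * bb * hB.antipode β) * γ) := by
    intro α β γ μ' sl r1 r2 hα
    simp only [hG₂Bdef, hNA, coe_comp, Function.comp_apply, rTensor_tmul, hα]
    simp only [tmul_sum, sum_tmul, map_sum]
    refine Finset.sum_congr rfl fun l _ => ?_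
    simp [mul_assoc]
  -- Step B1/B2 : fold into `G₂B`
  have stepB1 : ∑ j ∈ sE, ∑ m ∈ sY j, ∑ n ∈ sY2 j m,
      (a' * P.lact (y1 j m) aa) ⊗ₜ[K] ((y21 j m n * bb * hB.antipode (y22 j m n)) * vv j)
      = ∑ j ∈ sE, ∑ m ∈ sY j, G₂B (y1 j m ⊗ₜ[K] (y2 j m ⊗ₜ[K] vv j)) := by
    refine Finset.sum_congr rfl fun j hj => ?_
    -- the pure (no internal comultiplication) composite for the inner move
    set G₁ : B ⊗[K] (B ⊗[K] B) →ₗ[K] A ⊗[K] B :=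
      (TensorProduct.map NA
        ((mulRight K (vv j)) ∘ₗ (LinearMap.mul' K B)
          ∘ₗ (TensorProduct.map (mulRight K bb) hB.antipode.toLinearMap))) with hG₁def
    have hG₁ : ∀ α β γ : B, G₁ (α ⊗ₜ[K] (β ⊗ₜ[K] γ))
        = (a' * P.lact α aa) ⊗ₜ[K] ((β * bb * hB.antipode γ) * vv j) := by
      intro α β γ
      simp [hG₁def, hNA, mul_assoc]
    calc ∑ m ∈ sY j, ∑ n ∈ sY2 j m,
        (a' * P.lact (y1 j m) aa) ⊗ₜ[K] ((y21 j m n * bb * hB.antipode (y22 j m n)) * vv j)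
        = ∑ m ∈ sY j, ∑ n ∈ sY2 j m, G₁ (y1 j m ⊗ₜ[K] (y21 j m n ⊗ₜ[K] y22 j m n)) :=
          Finset.sum_congr rfl fun m _ => Finset.sum_congr rfl fun n _ => (hG₁ _ _ _).symm
      _ = ∑ m ∈ sY j, ∑ q ∈ sQ j m, G₁ (q1 j m q ⊗ₜ[K] (q2 j m q ⊗ₜ[K] y2 j m)) :=
          (coassoc_sum hB G₁ (hy1 j hj) (fun m _ => hQ j m) (hy2 j hj)).symm
      _ = ∑ m ∈ sY j, G₂B (y1 j m ⊗ₜ[K] (y2 j m ⊗ₜ[K] vv j)) := by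
          refine Finset.sum_congr rfl fun m _ => ?_
          rw [hG₂B (y1 j m) (y2 j m) (vv j) (hQ j m)]
          exact Finset.sum_congr rfl fun q _ => hG₁ _ _ _
  rw [stepB1]
  -- Step B3 : top-level coassociativity move
  rw [coassoc_sum hB G₂B hy hy1 (fun j _ => hVV j)]
  -- Step B4/B5 : evaluate and collapse
  set M : B ⊗[K] B →ₗ[K] A ⊗[K] B :=
    TensorProduct.map NA (mulRight K bb) with hMdef
  have hM : ∀ (γ : B) {μ' : Type} {sl : Finset μ'} {r1 r2 : μ' → B},
      hB.comul γ = ∑ l ∈ sl, r1 l ⊗ₜ[K] r2 l →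
      M (hB.comul γ) = ∑ l ∈ sl, (a' * P.lact (r1 l) aa) ⊗ₜ[K] (r2 l * bb) := by
    intro γ μ' sl r1 r2 hγ
    rw [hγ, map_sum]
    refine Finset.sum_congr rfl fun l _ => ?_
    simp [hMdef, hNA]
  have stepB4 : ∀ j ∈ sE, ∑ m' ∈ sVV j, G₂B (y j ⊗ₜ[K] (vv1 j m' ⊗ₜ[K] vv2 j m'))
      = hB.counit (vv j) • M (hB.comul (y j)) := by
    intro j hj
    calc ∑ m' ∈ sVV j, G₂B (y j ⊗ₜ[K] (vv1 j m' ⊗ₜ[K] vv2 j m'))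
        = ∑ m' ∈ sVV j, ∑ m ∈ sY j,
            (a' * P.lact (y1 j m) aa)
              ⊗ₜ[K] ((y2 j m * bb * hB.antipode (vv1 j m')) * vv2 j m') :=
          Finset.sum_congr rfl fun m' _ => hG₂B _ _ _ (hy1 j hj)
      _ = ∑ m ∈ sY j, ∑ m' ∈ sVV j,
            (a' * P.lact (y1 j m) aa)
              ⊗ₜ[K] ((y2 j m * bb) * (hB.antipode (vv1 j m') * vv2 j m')) := by
          rw [Finset.sum_comm]
          refine Finset.sum_congr rfl fun m _ => Finset.sum_congr rfl fun m' _ => ?_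
          rw [mul_assoc (y2 j m * bb)]
      _ = ∑ m ∈ sY j, hB.counit (vv j) • ((a' * P.lact (y1 j m) aa) ⊗ₜ[K] (y2 j m * bb)) := by
          refine Finset.sum_congr rfl fun m _ => ?_
          rw [← tmul_sum, ← Finset.mul_sum, antipode_sum_left' hB (hVV j), tmul_smul]
      _ = hB.counit (vv j) • M (hB.comul (y j)) := by
          rw [hM (y j) (hy1 j hj), Finset.smul_sum]
  rw [Finset.sum_congr rfl stepB4]
  -- absorb the counit and finish
  calc ∑ j ∈ sE, hB.counit (vv j) • M (hB.comul (y j))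
      = M (hB.comul (∑ j ∈ sE, hB.counit (vv j) • y j)) := by
        rw [map_sum, map_sum]
        exact Finset.sum_congr rfl fun j _ => by rw [map_smul, map_smul]
    _ = M (hB.comul b') := by rw [counit_right_sum hB hy]
    _ = ∑ j ∈ sE, (a' * P.lact (y j) aa) ⊗ₜ[K] ((vv j) * bb) := hM b' hy

end SubB

end HBCAux

namespace HBCAux

section Core
variable {K : Type} [Field K]
variable {A : Type} [NonUnitalRing A] [Module K A] [SMulCommClass K A A] [IsScalarTower K A A]
variable {B : Type} [NonUnitalRing B] [Module K B] [SMulCommClass K B B] [IsScalarTower K B B]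
variable {hA : RegularMultiplierHopf K A} {hB : RegularMultiplierHopf K B}
variable (P : MHAPairing K A B hA hB)

set_option maxHeartbeats 3200000 in
lemma core (a a' : A) (b b' : B) :
    (TensorProduct.lift ((TensorProduct.curry (hmulT P)) ∘ₗ
        ((TensorProduct.curry (actT P)).flip (a ⊗ₜ[K] b)))) (GammaT P (a' ⊗ₜ[K] b'))
    = hmulT P ((a' ⊗ₜ[K] b') ⊗ₜ[K] (a ⊗ₜ[K] b)) := by
  classical
  obtain ⟨sD, u, x, hu⟩ := exists_repr (K := K) (hA.comul a')
  obtain ⟨sE, y, vv, hy⟩ := exists_repr (K := K) (hB.comul b')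
  choose sX x1 x2 hx using fun i : ℕ => exists_repr (K := K) (hA.comul (x i))
  choose sX2 x21 x22 hx2 using fun (i k : ℕ) => exists_repr (K := K) (hA.comul (x2 i k))
  choose sY y1 y2 hy1 using fun j : ℕ => exists_repr (K := K) (hB.comul (y j))
  choose sY2 y21 y22 hy2 using fun (j m : ℕ) => exists_repr (K := K) (hB.comul (y2 j m))
  obtain ⟨sB, bb1, bb2, hb⟩ := exists_repr (K := K) (hB.comul b)
  choose sC c1 c2 hC using fun (j m n : ℕ) => exists_repr (K := K) (hB.comul (y21 j m n))
  choose sDl d1 d2 hD using fun (j m n : ℕ) => exists_repr (K := K) (hB.comul (y22 j m n))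
  have hΦ : ∀ g w : A ⊗[K] B,
      (TensorProduct.lift ((TensorProduct.curry (hmulT P)) ∘ₗ
        ((TensorProduct.curry (actT P)).flip (a ⊗ₜ[K] b)))) (g ⊗ₜ[K] w)
      = hmulT P ((actT P (g ⊗ₜ[K] (a ⊗ₜ[K] b))) ⊗ₜ[K] w) := by
    intro g w
    simp
  -- the expansion of the comultiplication of the element `w = y21 * b * S(y22)`
  have hW : ∀ j m n : ℕ, hB.comul (y21 j m n * b * hB.antipode (y22 j m n))
      = ∑ z ∈ (sC j m n) ×ˢ (sB ×ˢ (sDl j m n)),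
          (c1 j m n z.1 * bb1 z.2.1 * hB.antipode (d2 j m n z.2.2))
            ⊗ₜ[K] (c2 j m n z.1 * bb2 z.2.1 * hB.antipode (d1 j m n z.2.2)) := by
    intro j m n
    rw [comul_mul3_sum hB (hC j m n) hb (comul_antipodeB P (hD j m n))]
    rw [Finset.sum_product]
    refine Finset.sum_congr rfl fun z1 _ => ?_
    rw [Finset.sum_product]
  rw [GammaT_eq P a' b' hu hy]
  simp only [map_sum]
  calc ∑ i ∈ sD, ∑ j ∈ sE,
      (TensorProduct.lift ((TensorProduct.curry (hmulT P)) ∘ₗ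
        ((TensorProduct.curry (actT P)).flip (a ⊗ₜ[K] b))))
          ((x i ⊗ₜ[K] y j) ⊗ₜ[K] (u i ⊗ₜ[K] vv j))
      = ∑ i ∈ sD, ∑ j ∈ sE, ∑ m ∈ sY j, ∑ n ∈ sY2 j m, ∑ k ∈ sX i, ∑ l ∈ sX2 i k,
          ∑ z ∈ (sC j m n) ×ˢ (sB ×ˢ (sDl j m n)),
          ((x22 i k l * P.lact (y1 j m) a * hA.antipode.symm (x21 i k l))
            * P.lact (P.ractB (c1 j m n z.1 * bb1 z.2.1 * hB.antipode (d2 j m n z.2.2))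
                (hA.antipode.symm (x1 i k))) (u i))
          ⊗ₜ[K] ((c2 j m n z.1 * bb2 z.2.1 * hB.antipode (d1 j m n z.2.2)) * vv j) := by
        refine Finset.sum_congr rfl fun i _ => Finset.sum_congr rfl fun j _ => ?_
        rw [hΦ]
        rw [actT_eq' P (x i) a (y j) b
          (comul2_eq hA (hx i) (fun k _ => hx2 i k))
          (comul2_eq hB (hy1 j) (fun m _ => hy2 j m))]
        simp only [sum_tmul, map_sum]
        refine Finset.sum_congr rfl fun m _ => Finset.sum_congr rfl fun n _ =>
          Finset.sum_congr rfl fun k _ => Finset.sum_congr rfl fun l _ => ?_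
        rw [hmulT_eq P _ (u i) _ (vv j)
          (comul_ractB P (hW j m n) (hA.antipode.symm (x1 i k)))]
    _ = ∑ j ∈ sE, ∑ m ∈ sY j, ∑ n ∈ sY2 j m, ∑ i ∈ sD, ∑ k ∈ sX i, ∑ l ∈ sX2 i k,
          ∑ z ∈ (sC j m n) ×ˢ (sB ×ˢ (sDl j m n)),
          ((x22 i k l * P.lact (y1 j m) a * hA.antipode.symm (x21 i k l))
            * P.lact (P.ractB (c1 j m n z.1 * bb1 z.2.1 * hB.antipode (d2 j m n z.2.2))
                (hA.antipode.symm (x1 i k))) (u i))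
          ⊗ₜ[K] ((c2 j m n z.1 * bb2 z.2.1 * hB.antipode (d1 j m n z.2.2)) * vv j) := by
        rw [Finset.sum_comm]
        refine Finset.sum_congr rfl fun j _ => ?_
        rw [Finset.sum_comm]
        refine Finset.sum_congr rfl fun m _ => ?_
        rw [Finset.sum_comm]
    _ = ∑ j ∈ sE, ∑ m ∈ sY j, ∑ n ∈ sY2 j m,
          (a' * P.lact (y1 j m) a)
            ⊗ₜ[K] ((y21 j m n * b * hB.antipode (y22 j m n)) * vv j) := by
        refine Finset.sum_congr rfl fun j _ => Finset.sum_congr rfl fun m _ =>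
          Finset.sum_congr rfl fun n _ => ?_
        have := sublemmaA P (P.lact (y1 j m) a) (vv j) hu (fun i _ => hx i)
          (fun i _ k _ => hx2 i k) (hW j m n)
        rw [← this]
    _ = ∑ j ∈ sE, (a' * P.lact (y j) a) ⊗ₜ[K] ((vv j) * b) :=
        sublemmaB P a' a b hy (fun j _ => hy1 j) (fun j _ m _ => hy2 j m)
    _ = hmulT P ((a' ⊗ₜ[K] b') ⊗ₜ[K] (a ⊗ₜ[K] b)) := (hmulT_eq P a' a b' b hy).symm

end Core

end HBCAux

open HBCAux in
/-- Let `𝓓 = A ⋈ B` be the Drinfel'd double and `𝓗 = A # B` the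
Heisenberg double, regarded as a Yetter-Drinfel'd `𝓓`-module algebra via the action
`(a ⋈ b) · (a' # b') = a₍₃₎(b₍₁₎ ▶ a')S⁻¹(a₍₂₎) # (b₍₂₎ b' S(b₍₃₎)) ◀ S⁻¹(a₍₁₎)` and the
coaction `Γ` determined by `((a' ⋈ b') ⊗ 1)Γ(a # b) = (a' ⋈ b')(a₍₂₎ ⋈ b₍₁₎) ⊗ (a₍₁₎ # b₍₂₎)`.
Then `𝓗` is braided `𝓓`-commutative: for all `h, h' ∈ 𝓗` one has
`h' h = (h'₍₋₁₎ · h) h'₍₀₎`. -/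
theorem heisenberg_braided_commutative
    {K : Type} [Field K]
    {A : Type} [NonUnitalRing A] [Module K A] [SMulCommClass K A A] [IsScalarTower K A A]
    {B : Type} [NonUnitalRing B] [Module K B] [SMulCommClass K B B] [IsScalarTower K B B]
    {hA : RegularMultiplierHopf K A} {hB : RegularMultiplierHopf K B}
    (P : MHAPairing K A B hA hB) :
    ∃ (dmul : (A ⊗[K] B) →ₗ[K] (A ⊗[K] B) →ₗ[K] (A ⊗[K] B))
      (hmul : (A ⊗[K] B) →ₗ[K] (A ⊗[K] B) →ₗ[K] (A ⊗[K] B))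
      (act : (A ⊗[K] B) →ₗ[K] (A ⊗[K] B) →ₗ[K] (A ⊗[K] B))
      (Γ : (A ⊗[K] B) →ₗ[K] (A ⊗[K] B) ⊗[K] (A ⊗[K] B)),
      -- the Drinfel'd double product `(a ⋈ b)(a' ⋈ b') = a(b₍₁₎ ▶ a' ◀ S⁻¹(b₍₃₎)) ⋈ b₍₂₎ b'`
      (∀ (a a' : A) (b b' : B) (s : Finset ℕ) (b1 b2 b3 : ℕ → B),
        hB.comul2 b = ∑ i ∈ s, b1 i ⊗ₜ[K] (b2 i ⊗ₜ[K] b3 i) →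
        dmul (a ⊗ₜ[K] b) (a' ⊗ₜ[K] b')
          = ∑ i ∈ s,
              (a * P.ract (P.lact (b1 i) a') (hB.antipode.symm (b3 i))) ⊗ₜ[K] ((b2 i) * b')) ∧
      -- the Heisenberg double product `(a # b)(a' # b') = a(b₍₁₎ ▶ a') # b₍₂₎ b'`
      (∀ (a a' : A) (b b' : B) (s : Finset ℕ) (b1 b2 : ℕ → B),
        hB.comul b = ∑ i ∈ s, b1 i ⊗ₜ[K] b2 i →
        hmul (a ⊗ₜ[K] b) (a' ⊗ₜ[K] b')
          = ∑ i ∈ s, (a * P.lact (b1 i) a') ⊗ₜ[K] ((b2 i) * b')) ∧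
      -- the action
      -- `(a ⋈ b) · (a' # b') = a₍₃₎(b₍₁₎ ▶ a')S⁻¹(a₍₂₎) # (b₍₂₎ b' S(b₍₃₎)) ◀ S⁻¹(a₍₁₎)`
      (∀ (a a' : A) (b b' : B) (s t : Finset ℕ) (a1 a2 a3 : ℕ → A) (b1 b2 b3 : ℕ → B),
        hA.comul2 a = ∑ i ∈ s, a1 i ⊗ₜ[K] (a2 i ⊗ₜ[K] a3 i) →
        hB.comul2 b = ∑ j ∈ t, b1 j ⊗ₜ[K] (b2 j ⊗ₜ[K] b3 j) →
        act (a ⊗ₜ[K] b) (a' ⊗ₜ[K] b')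
          = ∑ i ∈ s, ∑ j ∈ t,
              (a3 i * P.lact (b1 j) a' * hA.antipode.symm (a2 i)) ⊗ₜ[K]
                (P.ractB ((b2 j) * b' * hB.antipode (b3 j)) (hA.antipode.symm (a1 i)))) ∧
      -- the coaction, determined by
      -- `((a' ⋈ b') ⊗ 1)Γ(a # b) = (a' ⋈ b')(a₍₂₎ ⋈ b₍₁₎) ⊗ (a₍₁₎ # b₍₂₎)`
      (∀ (a : A) (b : B) (s t : Finset ℕ) (a1 a2 : ℕ → A) (b1 b2 : ℕ → B),
        hA.comul a = ∑ i ∈ s, a1 i ⊗ₜ[K] a2 i →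
        hB.comul b = ∑ j ∈ t, b1 j ⊗ₜ[K] b2 j →
        ∀ g : A ⊗[K] B,
          (LinearMap.rTensor (A ⊗[K] B) (dmul g)) (Γ (a ⊗ₜ[K] b))
            = ∑ i ∈ s, ∑ j ∈ t,
                (dmul g (a2 i ⊗ₜ[K] b1 j)) ⊗ₜ[K] (a1 i ⊗ₜ[K] b2 j)) ∧
      -- braided `𝓓`-commutativity: `h' h = (h'₍₋₁₎ · h) h'₍₀₎`
      (∀ (h h' : A ⊗[K] B) (s : Finset ℕ) (g : ℕ → A ⊗[K] B) (w : ℕ → A ⊗[K] B),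
        Γ h' = ∑ k ∈ s, g k ⊗ₜ[K] w k →
        hmul h' h = ∑ k ∈ s, hmul (act (g k) h) (w k)) := by
  classical
  refine ⟨TensorProduct.curry (dmulT P), TensorProduct.curry (hmulT P),
    TensorProduct.curry (actT P), GammaT P, ?_, ?_, ?_, ?_, ?_⟩
  · intro a a' b b' s b1 b2 b3 hb
    rw [TensorProduct.curry_apply, dmulT_eq P a a' b b' hb]
  · intro a a' b b' s b1 b2 hb
    rw [TensorProduct.curry_apply, hmulT_eq P a a' b b' hb]
  · intro a a' b b' s t a1 a2 a3 b1 b2 b3 ha hb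
    rw [TensorProduct.curry_apply, actT_eq P a a' b b' ha hb]
  · intro a b s t a1 a2 b1 b2 ha hb g
    rw [GammaT_eq P a b ha hb]
    simp only [map_sum, rTensor_tmul, TensorProduct.curry_apply]
  · intro h h' s g w hΓ
    -- `Φ h` is the map  g ⊗ w ↦ hmul (act g h) w
    set Φ : (A ⊗[K] B) →ₗ[K] ((A ⊗[K] B) ⊗[K] (A ⊗[K] B)) →ₗ[K] (A ⊗[K] B) :=
      { toFun := fun hh => TensorProduct.lift ((TensorProduct.curry (hmulT P)) ∘ₗ
          ((TensorProduct.curry (actT P)).flip hh))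
        map_add' := by
          intro h₁ h₂
          apply TensorProduct.ext'
          intro gg ww
          simp [TensorProduct.lift.tmul, tmul_add]
        map_smul' := by
          intro cc hh
          apply TensorProduct.ext'
          intro gg ww
          simp [TensorProduct.lift.tmul, tmul_smul] } with hΦdef
    have hΦtmul : ∀ (hh gg ww : A ⊗[K] B),
        Φ hh (gg ⊗ₜ[K] ww)
          = (TensorProduct.curry (hmulT P)) ((TensorProduct.curry (actT P)) gg hh) ww := by
      intro hh gg ww
      simp [hΦdef, TensorProduct.lift.tmul]
    have claim : ∀ (h' h : A ⊗[K] B), Φ h (GammaT P h') = TensorProduct.curry (hmulT P) h' h := by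
      intro h'
      induction h' using TensorProduct.induction_on with
      | zero => intro hh; simp
      | tmul a' b' =>
        intro hh
        induction hh using TensorProduct.induction_on with
        | zero => simp
        | tmul a b =>
          rw [TensorProduct.curry_apply]
          exact core P a a' b b'
        | add h₁ h₂ ih₁ ih₂ => rw [map_add, LinearMap.add_apply, ih₁, ih₂, map_add]
      | add t₁ t₂ ih₁ ih₂ =>
        intro hh
        rw [map_add, map_add, ih₁, ih₂, map_add, LinearMap.add_apply]
    calc TensorProduct.curry (hmulT P) h' h
        = Φ h (GammaT P h') := (claim h' h).symm
      _ = ∑ k ∈ s, Φ h (g k ⊗ₜ[K] w k) := by rw [hΓ, map_sum]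
      _ = ∑ k ∈ s, (TensorProduct.curry (hmulT P))
            ((TensorProduct.curry (actT P)) (g k) h) (w k) :=
          Finset.sum_congr rfl fun k _ => hΦtmul h (g k) (w k)
end

section
/- Let G be a group, 𝓓 = K(G) ⋈ K[G] the Drinfel'd double and 𝓗 = K(G) # K[G] the Heisenberg double. The action (δ_p ⋈ q)·(δ_{p'} # q') = δ_{p'q'q^{-1}p} δ_{p'q^{-1}} # qq'q^{-1} and the coaction Γ(δ_p # q) = Σ_{s∈G} (δ_{s^{-1}p} ⋈ q) ⊗ (δ_s # q) make K(G) # K[G] a (left-left) Yetter-Drinfel'd module algebra over K(G) ⋈ K[G]. -/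
open TensorProduct LinearMap
open scoped TensorProduct

section GroupCase

variable (K : Type) [Field K] (G : Type) [Group G]

/-- The Dirac function `δ_p ∈ K(G)`, where `K(G)` is modelled as the non-unital algebra
`G →₀ K` of finitely supported `K`-valued functions on `G` with the pointwise product.
`K(G)` is the motivating example of a regular multiplier Hopf algebra, with
`Δ(δ_p) = ∑_{s ∈ G} δ_s ⊗ δ_{s⁻¹p}`. -/
noncomputable def dirac (p : G) : G →₀ K := Finsupp.single p 1

/-- The group element `q` viewed in the group algebra `B = K[G]`. -/
noncomputable def grp (q : G) : MonoidAlgebra K G := MonoidAlgebra.single q 1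

/-- The left regular action of a group element `q ∈ K[G]` on `K(G)`, determined by the
pairing `⟨δ_p, g⟩ = δ_{p,g}`:  `q ▶ δ_p = δ_{pq⁻¹}`. -/
noncomputable def lreg (q : G) : (G →₀ K) →ₗ[K] (G →₀ K) :=
  Finsupp.lmapDomain K K (fun p => p * q⁻¹)

/-- Pure tensors `δ_p ⊗ q`, the spanning elements of the Drinfel'd double
`𝓓 = K(G) ⋈ K[G]` and of the Heisenberg double `𝓗 = K(G) # K[G]` (both have underlying
vector space `K(G) ⊗ K[G]`). -/
noncomputable def dd (p q : G) : (G →₀ K) ⊗[K] MonoidAlgebra K G :=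
  dirac K G p ⊗ₜ[K] grp K G q

end GroupCase

/-- The common underlying vector space `K(G) ⊗ K[G]` of the Drinfel'd double
`𝓓 = K(G) ⋈ K[G]` and of the Heisenberg double `𝓗 = K(G) # K[G]`. -/
abbrev DH (K : Type) [Field K] (G : Type) [Group G] :=
  (G →₀ K) ⊗[K] MonoidAlgebra K G

namespace YD
open TensorProduct LinearMap
open scoped TensorProduct Classical

variable (K : Type) [Field K] (G : Type) [Group G]

noncomputable instance : Zero (DH K G) := AddMonoid.toZero

noncomputable instance : Zero (DH K G ⊗[K] DH K G) := AddMonoid.toZero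

/-- Linear maps out of `K[G]` from values on group elements. -/
noncomputable def bL {M : Type} [AddCommMonoid M] [Module K M] (f : G → M) :
    MonoidAlgebra K G →ₗ[K] M :=
  Finsupp.linearCombination K f ∘ₗ (MonoidAlgebra.coeffLinearEquiv K).toLinearMap

/-- Linear maps out of `DH K G` from values on the `dd` basis. -/
noncomputable def dLift {M : Type} [AddCommMonoid M] [Module K M] (f : G → G → M) :
    DH K G →ₗ[K] M :=
  TensorProduct.lift (Finsupp.linearCombination K fun g => bL K G (f g))

@[simp] lemma dLift_dd {M : Type} [AddCommMonoid M] [Module K M] (f : G → G → M) (p q : G) :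
    dLift K G f (dd K G p q) = f p q := by
  simp only [dLift, bL, dd, dirac, grp, MonoidAlgebra.single, lift.tmul,
    Finsupp.linearCombination_single, one_smul]
  erw [Finsupp.linearCombination_single, one_smul]

/-- Bilinear maps out of `DH K G` from values on pairs of `dd` basis vectors. -/
noncomputable def bLift {M : Type} [AddCommMonoid M] [Module K M] (f : G → G → G → G → M) :
    DH K G →ₗ[K] DH K G →ₗ[K] M :=
  dLift K G fun a b => dLift K G (f a b)

@[simp] lemma bLift_dd {M : Type} [AddCommMonoid M] [Module K M] (f : G → G → G → G → M)
    (a b p q : G) : bLift K G f (dd K G a b) (dd K G p q) = f a b p q := by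
  simp [bLift]

lemma span_dd : Submodule.span K (Set.range fun pq : G × G => dd K G pq.1 pq.2) = ⊤ := by
  rw [eq_top_iff]
  rintro x -
  induction x using TensorProduct.induction_on with
  | zero => exact zero_mem _
  | add x y hx hy => exact add_mem hx hy
  | tmul a b =>
    induction b using MonoidAlgebra.induction_on with
    | of q =>
      induction a using Finsupp.induction_linear with
      | zero => rw [zero_tmul]; exact zero_mem _
      | add f g hf hg => rw [add_tmul]; exact add_mem hf hg
      | single p c =>
        have : (Finsupp.single p c : G →₀ K) ⊗ₜ[K] MonoidAlgebra.of K G q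
            = c • dd K G p q := by
          rw [dd, dirac, grp, ← Finsupp.smul_single_one p c, smul_tmul']
          rfl
        rw [this]
        exact Submodule.smul_mem _ _ (Submodule.subset_span ⟨(p, q), rfl⟩)
    | add f g hf hg => rw [tmul_add]; exact add_mem hf hg
    | smul r f hf => rw [tmul_smul]; exact Submodule.smul_mem _ _ hf

lemma dh_ext' {M : Type} [AddCommMonoid M] [Module K M] {f g : DH K G →ₗ[K] M}
    (h : ∀ p q, f (dd K G p q) = g (dd K G p q)) : ∀ x, f x = g x := by
  suffices hfg : f = g by intro x; rw [hfg]
  refine LinearMap.ext_on (span_dd K G) ?_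
  rintro x ⟨⟨p, q⟩, rfl⟩
  exact h p q

lemma dh_repr (x : DH K G) :
    ∃ c : (G × G) →₀ K, (c.sum fun ij a => a • dd K G ij.1 ij.2) = x :=
  Finsupp.mem_span_range_iff_exists_finsupp.1 (by rw [span_dd K G]; trivial)

/-- A family of linear maps with finite support on basis vectors has finite support
everywhere. -/
lemma fin_ext {M : Type} [AddCommMonoid M] [Module K M] (F : G → DH K G →ₗ[K] M)
    (hfin : ∀ a b : G, (Function.support fun s => F s (dd K G a b)).Finite) (g : DH K G) :
    (Function.support fun s => F s g).Finite := by
  obtain ⟨c, rfl⟩ := dh_repr K G g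
  rw [Finsupp.sum]
  have : (Function.support fun s => F s (∑ ij ∈ c.support, c ij • dd K G ij.1 ij.2))
      ⊆ ⋃ ij ∈ c.support, Function.support fun s => F s (dd K G ij.1 ij.2) := by
    intro s hs
    simp only [map_sum, Function.mem_support] at hs
    have := Finset.exists_ne_zero_of_sum_ne_zero hs
    obtain ⟨ij, hij, hne⟩ := this
    refine Set.mem_biUnion hij ?_
    simp only [map_smul] at hne
    intro h0
    simp [Function.mem_support] at h0
    rw [h0, smul_zero] at hne
    exact hne rfl
  exact Set.Finite.subset (Set.Finite.biUnion c.support.finite_toSet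
    fun ij _ => hfin ij.1 ij.2) this

lemma finsum_finset_swap {ι M : Type} [AddCommMonoid M] (t : Finset ι) (f : ι → G → M)
    (h : ∀ i ∈ t, (Function.support (f i)).Finite) :
    ∑ᶠ s : G, ∑ i ∈ t, f i s = ∑ i ∈ t, ∑ᶠ s : G, f i s := by
  classical
  induction t using Finset.induction_on with
  | empty => simp
  | @insert a t ha ih =>
    have h1 : (Function.support fun s => ∑ i ∈ t, f i s).Finite := by
      refine Set.Finite.subset (Set.Finite.biUnion t.finite_toSet
        fun i hi => h i (Finset.mem_insert_of_mem hi)) ?_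
      exact Finset.support_sum t f
    calc ∑ᶠ s : G, ∑ i ∈ insert a t, f i s
        = ∑ᶠ s : G, (f a s + ∑ i ∈ t, f i s) := by
          refine finsum_congr fun s => ?_
          rw [Finset.sum_insert ha]
      _ = (∑ᶠ s : G, f a s) + ∑ᶠ s : G, ∑ i ∈ t, f i s :=
          finsum_add_distrib (h a (Finset.mem_insert_self a t)) h1
      _ = ∑ i ∈ insert a t, ∑ᶠ s : G, f i s := by
          rw [Finset.sum_insert ha, ih fun i hi => h i (Finset.mem_insert_of_mem hi)]

/-- Identities between `∑ᶠ`-sums of linear families and linear maps can be checked on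
basis vectors. -/
lemma finsum_ext {M : Type} [AddCommMonoid M] [Module K M] (F : G → DH K G →ₗ[K] M)
    (Ψ : DH K G →ₗ[K] M)
    (hfin : ∀ a b : G, (Function.support fun s => F s (dd K G a b)).Finite)
    (heq : ∀ a b : G, ∑ᶠ s : G, F s (dd K G a b) = Ψ (dd K G a b)) (g : DH K G) :
    ∑ᶠ s : G, F s g = Ψ g := by
  obtain ⟨c, rfl⟩ := dh_repr K G g
  rw [Finsupp.sum]
  have step : ∀ s : G, F s (∑ ij ∈ c.support, c ij • dd K G ij.1 ij.2)
      = ∑ ij ∈ c.support, c ij • F s (dd K G ij.1 ij.2) := by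
    intro s; rw [map_sum]; exact Finset.sum_congr rfl fun ij _ => by rw [map_smul]
  calc ∑ᶠ s : G, F s (∑ ij ∈ c.support, c ij • dd K G ij.1 ij.2)
      = ∑ᶠ s : G, ∑ ij ∈ c.support, c ij • F s (dd K G ij.1 ij.2) :=
        finsum_congr step
    _ = ∑ ij ∈ c.support, ∑ᶠ s : G, c ij • F s (dd K G ij.1 ij.2) := by
        refine finsum_finset_swap G c.support _ fun ij _ => ?_
        refine Set.Finite.subset (hfin ij.1 ij.2) ?_
        intro s hs
        rw [Function.mem_support] at hs ⊢
        exact fun h0 => hs (by rw [h0, smul_zero])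
    _ = ∑ ij ∈ c.support, c ij • ∑ᶠ s : G, F s (dd K G ij.1 ij.2) := by
        refine Finset.sum_congr rfl fun ij _ => ?_
        rw [smul_finsum' (c ij) (hfin ij.1 ij.2)]
    _ = ∑ ij ∈ c.support, c ij • Ψ (dd K G ij.1 ij.2) := by
        refine Finset.sum_congr rfl fun ij _ => by rw [heq]
    _ = Ψ (∑ ij ∈ c.support, c ij • dd K G ij.1 ij.2) := by
        rw [map_sum]; exact Finset.sum_congr rfl fun ij _ => (map_smul _ _ _).symm


/-- The linear map `v ↦ ∑ᶠ s, F s v` for a family with basiswise finite support. -/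
noncomputable def finsumMap {M : Type} [AddCommMonoid M] [Module K M] (F : G → DH K G →ₗ[K] M)
    (hfin : ∀ a b : G, (Function.support fun s => F s (dd K G a b)).Finite) :
    DH K G →ₗ[K] M where
  toFun v := ∑ᶠ s : G, F s v
  map_add' x y := by
    simp only [map_add]
    exact finsum_add_distrib (fin_ext K G F hfin x) (fin_ext K G F hfin y)
  map_smul' c x := by
    simp only [map_smul, RingHom.id_apply]
    exact (smul_finsum' c (fin_ext K G F hfin x)).symm

@[simp] lemma finsumMap_apply {M : Type} [AddCommMonoid M] [Module K M]
    (F : G → DH K G →ₗ[K] M) (hfin) (v : DH K G) :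
    finsumMap K G F hfin v = ∑ᶠ s : G, F s v := rfl

-- ### Group-manipulation helpers
lemma solve_left {H : Type} [Group H] {x p r : H} (h : x * p = r) : p = x⁻¹ * r := by
  rw [← h]; group
lemma solve_inv_mul {H : Type} [Group H] {x g r : H} (h : x⁻¹ * g = r) : g = x * r := by
  rw [← h]; group
lemma conj_solve {H : Type} [Group H] {a x y : H} (h : y = a * x * a⁻¹) : x = a⁻¹ * y * a := by
  rw [h]; group

lemma dd_eq {p p' q q' : G} (h1 : p = p') (h2 : q = q') : dd K G p q = dd K G p' q' := by
  rw [h1, h2]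

-- ### Basic computations in K(G) and K[G]
lemma single_pmul_single (p r : G) (c c' : K) :
    (Finsupp.single p c * Finsupp.single r c' : G →₀ K)
      = if p = r then Finsupp.single p (c * c') else 0 := by
  classical
  ext x
  simp only [Finsupp.mul_apply, Finsupp.single_apply,
    apply_ite (fun f : G →₀ K => f x), Finsupp.zero_apply]
  split_ifs <;> simp_all

lemma dirac_mul (p r : G) :
    dirac K G p * dirac K G r = if p = r then dirac K G p else 0 := by
  rw [dirac, dirac, single_pmul_single, one_mul]

lemma grp_mul (q q' : G) : grp K G q * grp K G q' = grp K G (q * q') := by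
  rw [grp, grp, grp, MonoidAlgebra.single_mul_single, one_mul]

lemma lreg_dirac (q p : G) : lreg K G q (dirac K G p) = dirac K G (p * q⁻¹) := by
  simp [lreg, dirac]

-- ### The structure maps
/-- The Drinfel'd double multiplication. -/
noncomputable def dmul : DH K G →ₗ[K] DH K G →ₗ[K] DH K G :=
  bLift K G fun g h p q =>
    (dirac K G g * dirac K G (h * p * h⁻¹)) ⊗ₜ[K] grp K G (h * q)

/-- The Heisenberg double (smash product) multiplication. -/
noncomputable def hmul : DH K G →ₗ[K] DH K G →ₗ[K] DH K G :=
  bLift K G fun p q p' q' =>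
    (dirac K G p * lreg K G q (dirac K G p')) ⊗ₜ[K] (grp K G q * grp K G q')

/-- The counit of the Drinfel'd double. -/
noncomputable def dcounit : DH K G →ₗ[K] K :=
  dLift K G fun g _ =>
    (haveI := Classical.dec (g = (1 : G)); if g = (1 : G) then (1 : K) else 0)

/-- The action of the Drinfel'd double on the Heisenberg double. -/
noncomputable def act : DH K G →ₗ[K] DH K G →ₗ[K] DH K G :=
  bLift K G fun p q p' q' =>
    (dirac K G (p' * q' * q⁻¹ * p) * dirac K G (p' * q⁻¹)) ⊗ₜ[K] grp K G (q * q' * q⁻¹)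

/-- The left-cut coaction. -/
noncomputable def cG : DH K G →ₗ[K] DH K G →ₗ[K] DH K G ⊗[K] DH K G :=
  bLift K G fun a b p q =>
    dd K G a (b * q) ⊗ₜ[K] dd K G (p * b⁻¹ * a⁻¹ * b) q

/-- The right-cut coaction. -/
noncomputable def cGR : DH K G →ₗ[K] DH K G →ₗ[K] DH K G ⊗[K] DH K G :=
  bLift K G fun a b p q =>
    dd K G (q * a * q⁻¹) (q * b) ⊗ₜ[K] dd K G (p * q * a⁻¹ * q⁻¹) q

-- ### Values on basis vectors
lemma dmul_dd (g h p q : G) :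
    dmul K G (dd K G g h) (dd K G p q)
      = if g = h * p * h⁻¹ then dd K G g (h * q) else (0 : DH K G) := by
  rw [dmul, bLift_dd, dirac_mul, ite_tmul]; rfl

lemma hmul_dd (p q p' q' : G) :
    hmul K G (dd K G p q) (dd K G p' q')
      = if p = p' * q⁻¹ then dd K G p (q * q') else (0 : DH K G) := by
  rw [hmul, bLift_dd, lreg_dirac, dirac_mul, grp_mul, ite_tmul]; rfl

lemma act_dd (p q p' q' : G) :
    act K G (dd K G p q) (dd K G p' q')
      = if p = q * q'⁻¹ * q⁻¹ then dd K G (p' * q⁻¹) (q * q' * q⁻¹) else (0 : DH K G) := by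
  rw [act, bLift_dd, dirac_mul, ite_tmul]
  by_cases hc : p = q * q'⁻¹ * q⁻¹
  · subst hc
    rw [if_pos (by group), if_pos rfl]
    exact congrArg (· ⊗ₜ[K] grp K G (q * q' * q⁻¹)) (congrArg (dirac K G) (by group))
  · rw [if_neg ?_, if_neg hc]
    intro h
    exact hc ((solve_left h).trans (by group))

lemma cG_dd (a b p q : G) :
    cG K G (dd K G a b) (dd K G p q)
      = dd K G a (b * q) ⊗ₜ[K] dd K G (p * b⁻¹ * a⁻¹ * b) q := by
  rw [cG, bLift_dd]

lemma cGR_dd (a b p q : G) :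
    cGR K G (dd K G a b) (dd K G p q)
      = dd K G (q * a * q⁻¹) (q * b) ⊗ₜ[K] dd K G (p * q * a⁻¹ * q⁻¹) q := by
  rw [cGR, bLift_dd]

lemma dcounit_dd (g h : G) :
    dcounit K G (dd K G g h)
      = (haveI := Classical.dec (g = (1 : G)); if g = (1 : G) then (1 : K) else 0) := by
  rw [dcounit, dLift_dd]

lemma dd_def (p q : G) : dirac K G p ⊗ₜ[K] grp K G q = dd K G p q := rfl

lemma solve_right {H : Type} [Group H] {p x r : H} (h : p * x = r) : p = r * x⁻¹ := by
  rw [← h]; group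
lemma solve_inv {H : Type} [Group H] {s p r : H} (h : s⁻¹ * p = r) : s = p * r⁻¹ := by
  rw [← h]; group

lemma goal1 (g h p q : G) :
    dmul K G (dd K G g h) (dd K G p q)
      = (dirac K G g * dirac K G (h * p * h⁻¹)) ⊗ₜ[K] grp K G (h * q) := by
  rw [dmul, bLift_dd]

lemma single_eq_smul_dirac (p : G) (c : K) :
    (Finsupp.single p c : G →₀ K) = c • dirac K G p := by
  rw [dirac, Finsupp.smul_single, smul_eq_mul, mul_one]

lemma lreg_single (q p : G) (c : K) :
    lreg K G q (Finsupp.single p c) = Finsupp.single (p * q⁻¹) c := by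
  simp [lreg]

lemma goal2 (a a' : G →₀ K) (q q' : G) :
    hmul K G (a ⊗ₜ[K] grp K G q) (a' ⊗ₜ[K] grp K G q')
      = (a * (lreg K G q) a') ⊗ₜ[K] (grp K G q * grp K G q') := by
  induction a using Finsupp.induction_linear with
  | zero => simp [zero_tmul, zero_mul]
  | add f g hf hg => rw [add_tmul, map_add, LinearMap.add_apply, hf, hg, add_mul, add_tmul]
  | single p c =>
    induction a' using Finsupp.induction_linear with
    | zero => simp [zero_tmul, mul_zero]
    | add f g hf hg =>
      rw [add_tmul, map_add, hf, hg, map_add, mul_add, add_tmul]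
    | single p' c' =>
      have hR : (Finsupp.single p c * lreg K G q (Finsupp.single p' c') : G →₀ K)
          = if p = p' * q⁻¹ then Finsupp.single p (c * c') else 0 := by
        rw [lreg_single, single_pmul_single]
      rw [hR, grp_mul, ite_tmul, single_eq_smul_dirac, single_eq_smul_dirac,
        ← smul_tmul', ← smul_tmul', map_smul, map_smul, LinearMap.smul_apply,
        dd_def, dd_def, hmul_dd]
      by_cases hc : p = p' * q⁻¹
      · rw [if_pos hc, if_pos hc, single_eq_smul_dirac, ← smul_tmul', dd_def,
          smul_smul, mul_comm c' c]
      · rw [if_neg hc, if_neg hc, smul_zero, smul_zero]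

lemma goal3 (g h : G) :
    dcounit K G (dd K G g h)
      = (haveI := Classical.dec (g = (1 : G)); if g = (1 : G) then (1 : K) else 0) := by
  rw [dcounit, dLift_dd]

lemma goal4 (p q p' q' : G) :
    act K G (dd K G p q) (dd K G p' q')
      = (dirac K G (p' * q' * q⁻¹ * p) * dirac K G (p' * q⁻¹))
          ⊗ₜ[K] grp K G (q * q' * q⁻¹) := by
  rw [act, bLift_dd]

lemma goal8 :
    Submodule.span K {x : DH K G | ∃ d h : DH K G, act K G d h = x} = ⊤ := by
  rw [eq_top_iff, ← span_dd K G]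
  refine Submodule.span_mono ?_
  rintro x ⟨⟨p, q⟩, rfl⟩
  refine ⟨dd K G q⁻¹ 1, dd K G p q, ?_⟩
  rw [act_dd, if_pos (by group)]
  exact dd_eq K G (by group) (by group)

lemma goal10 (g : DH K G) (x : DH K G) :
    (TensorProduct.lid K (DH K G)) ((LinearMap.rTensor (DH K G) (dcounit K G))
        ((cG K G g) x))
      = dcounit K G g • x := by
  have core : ∀ a b p q : G,
      (TensorProduct.lid K (DH K G)) ((LinearMap.rTensor (DH K G) (dcounit K G))
        ((cG K G (dd K G a b)) (dd K G p q)))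
      = dcounit K G (dd K G a b) • dd K G p q := by
    intro a b p q
    rw [cG_dd, LinearMap.rTensor_tmul, TensorProduct.lid_tmul, dcounit_dd, dcounit_dd]
    by_cases ha : a = (1 : G)
    · subst ha
      rw [if_pos rfl, one_smul, one_smul]
      exact dd_eq K G (by group) rfl
    · rw [if_neg ha, zero_smul, zero_smul]
  have hx : ∀ p q : G,
      (TensorProduct.lid K (DH K G)) ((LinearMap.rTensor (DH K G) (dcounit K G))
        ((cG K G g) (dd K G p q)))
      = dcounit K G g • dd K G p q := by
    intro p q
    have := dh_ext' K G
      (f := (TensorProduct.lid K (DH K G)).toLinearMap ∘ₗ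
        (LinearMap.rTensor (DH K G) (dcounit K G)) ∘ₗ (cG K G).flip (dd K G p q))
      (g := (LinearMap.toSpanSingleton K (DH K G) (dd K G p q)) ∘ₗ dcounit K G)
      (fun a b => by
        simpa [LinearMap.toSpanSingleton_apply] using core a b p q) g
    simpa [LinearMap.toSpanSingleton_apply] using this
  have := dh_ext' K G
    (f := (TensorProduct.lid K (DH K G)).toLinearMap ∘ₗ
      (LinearMap.rTensor (DH K G) (dcounit K G)) ∘ₗ cG K G g)
    (g := dcounit K G g • LinearMap.id)
    (fun p q => by simpa using hx p q) x
  simpa using this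

lemma goal5 (g : DH K G) (p q : G) :
    cG K G g (dd K G p q)
      = ∑ᶠ s : G, (dmul K G g (dd K G (s⁻¹ * p) q)) ⊗ₜ[K] (dd K G s q) := by
  have main := finsum_ext K G
    (F := fun s => (TensorProduct.mk K (DH K G) (DH K G)).flip (dd K G s q) ∘ₗ
      (dmul K G).flip (dd K G (s⁻¹ * p) q))
    (Ψ := (cG K G).flip (dd K G p q))
    (hfin := ?_) (heq := ?_) g
  · simpa only [LinearMap.coe_comp, Function.comp_apply, LinearMap.flip_apply,
      TensorProduct.mk_apply] using main.symm
  · intro a b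
    refine Set.Finite.subset (Set.finite_singleton (p * b⁻¹ * a⁻¹ * b)) ?_
    intro s hs
    simp only [Function.mem_support, LinearMap.coe_comp, Function.comp_apply,
      LinearMap.flip_apply, TensorProduct.mk_apply, dmul_dd] at hs
    by_cases hcond : a = b * (s⁻¹ * p) * b⁻¹
    · have e2 : s = p * b⁻¹ * a⁻¹ * b := by
        have e3 : s⁻¹ * p = b⁻¹ * a * b := by
          have e4 : s⁻¹ * p = b⁻¹ * (b * (s⁻¹ * p) * b⁻¹) * b := by group
          rw [← hcond] at e4
          exact e4
        exact (solve_inv e3).trans (by group)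
      exact e2
    · rw [if_neg hcond, zero_tmul] at hs
      exact absurd rfl hs
  · intro a b
    have hz : ∀ s : G, s ≠ p * b⁻¹ * a⁻¹ * b →
        ((TensorProduct.mk K (DH K G) (DH K G)).flip (dd K G s q) ∘ₗ
          (dmul K G).flip (dd K G (s⁻¹ * p) q)) (dd K G a b) = 0 := by
      intro s hs
      simp only [LinearMap.coe_comp, Function.comp_apply, LinearMap.flip_apply,
        TensorProduct.mk_apply, dmul_dd]
      rw [if_neg ?_, zero_tmul]
      intro hcond
      apply hs
      have e3 : s⁻¹ * p = b⁻¹ * a * b := by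
        have e4 : s⁻¹ * p = b⁻¹ * (b * (s⁻¹ * p) * b⁻¹) * b := by group
        rw [← hcond] at e4
        exact e4
      exact (solve_inv e3).trans (by group)
    rw [finsum_eq_single _ (p * b⁻¹ * a⁻¹ * b) hz]
    simp only [LinearMap.coe_comp, Function.comp_apply, LinearMap.flip_apply,
      TensorProduct.mk_apply, dmul_dd, cG_dd]
    rw [if_pos (by group)]

lemma goal6 (g : DH K G) (p q : G) :
    cGR K G g (dd K G p q)
      = ∑ᶠ s : G, (dmul K G (dd K G (s⁻¹ * p) q) g) ⊗ₜ[K] (dd K G s q) := by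
  have main := finsum_ext K G
    (F := fun s => (TensorProduct.mk K (DH K G) (DH K G)).flip (dd K G s q) ∘ₗ
      dmul K G (dd K G (s⁻¹ * p) q))
    (Ψ := (cGR K G).flip (dd K G p q))
    (hfin := ?_) (heq := ?_) g
  · simpa only [LinearMap.coe_comp, Function.comp_apply, LinearMap.flip_apply,
      TensorProduct.mk_apply] using main.symm
  · intro a b
    refine Set.Finite.subset (Set.finite_singleton (p * q * a⁻¹ * q⁻¹)) ?_
    intro s hs
    simp only [Function.mem_support, LinearMap.coe_comp, Function.comp_apply,
      LinearMap.flip_apply, TensorProduct.mk_apply, dmul_dd] at hs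
    by_cases hcond : s⁻¹ * p = q * a * q⁻¹
    · exact (solve_inv hcond).trans (by group)
    · rw [if_neg hcond, zero_tmul] at hs
      exact absurd rfl hs
  · intro a b
    have hz : ∀ s : G, s ≠ p * q * a⁻¹ * q⁻¹ →
        ((TensorProduct.mk K (DH K G) (DH K G)).flip (dd K G s q) ∘ₗ
          dmul K G (dd K G (s⁻¹ * p) q)) (dd K G a b) = 0 := by
      intro s hs
      simp only [LinearMap.coe_comp, Function.comp_apply, LinearMap.flip_apply,
        TensorProduct.mk_apply, dmul_dd]
      rw [if_neg ?_, zero_tmul]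
      intro hcond
      exact hs ((solve_inv hcond).trans (by group))
    rw [finsum_eq_single _ (p * q * a⁻¹ * q⁻¹) hz]
    simp only [LinearMap.coe_comp, Function.comp_apply, LinearMap.flip_apply,
      TensorProduct.mk_apply, dmul_dd, cGR_dd]
    rw [if_pos (by group)]
    exact congrArg₂ (fun u v => u ⊗ₜ[K] v) (dd_eq K G (by group) rfl) rfl

lemma goal7_core (a b p2 q2 u v : G) :
    act K G (dmul K G (dd K G a b) (dd K G p2 q2)) (dd K G u v)
      = act K G (dd K G a b) (act K G (dd K G p2 q2) (dd K G u v)) := by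
  rw [dmul_dd]
  by_cases hc : a = b * p2 * b⁻¹
  · subst hc
    rw [if_pos rfl, act_dd, act_dd]
    by_cases h2 : p2 = q2 * v⁻¹ * q2⁻¹
    · subst h2
      rw [if_pos (by group), if_pos rfl, act_dd, if_pos (by group)]
      exact dd_eq K G (by group) (by group)
    · rw [if_neg (fun h => h2 (by rw [conj_solve h]; group)), if_neg h2, map_zero]
  · rw [if_neg hc, map_zero, LinearMap.zero_apply, act_dd]
    by_cases h2 : p2 = q2 * v⁻¹ * q2⁻¹
    · subst h2
      rw [if_pos rfl, act_dd, if_neg (fun h => hc (h.trans (by group)))]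
    · rw [if_neg h2, map_zero]

lemma goal7 (d d' x : DH K G) :
    act K G (dmul K G d d') x = act K G d (act K G d' x) := by
  have step1 : ∀ a b p2 q2 (x : DH K G),
      act K G (dmul K G (dd K G a b) (dd K G p2 q2)) x
        = act K G (dd K G a b) (act K G (dd K G p2 q2) x) := by
    intro a b p2 q2 x
    have := dh_ext' K G (f := act K G (dmul K G (dd K G a b) (dd K G p2 q2)))
      (g := (act K G (dd K G a b)) ∘ₗ (act K G (dd K G p2 q2)))
      (fun u v => by
        simpa only [LinearMap.coe_comp, Function.comp_apply] using
          goal7_core K G a b p2 q2 u v) x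
    simpa only [LinearMap.coe_comp, Function.comp_apply] using this
  have step2 : ∀ a b (d' x : DH K G),
      act K G (dmul K G (dd K G a b) d') x
        = act K G (dd K G a b) (act K G d' x) := by
    intro a b d' x
    have := dh_ext' K G
      (f := ((act K G).flip x) ∘ₗ (dmul K G (dd K G a b)))
      (g := (act K G (dd K G a b)) ∘ₗ ((act K G).flip x))
      (fun p2 q2 => by
        simpa only [LinearMap.coe_comp, Function.comp_apply, LinearMap.flip_apply]
          using step1 a b p2 q2 x) d'
    simpa only [LinearMap.coe_comp, Function.comp_apply, LinearMap.flip_apply] using this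
  have := dh_ext' K G
    (f := ((act K G).flip x) ∘ₗ ((dmul K G).flip d'))
    (g := (act K G).flip (act K G d' x))
    (fun a b => by
      simpa only [LinearMap.coe_comp, Function.comp_apply, LinearMap.flip_apply]
        using step2 a b d' x) d
  simpa only [LinearMap.coe_comp, Function.comp_apply, LinearMap.flip_apply] using this

lemma goal9_core (gg h a1 b1 a2 b2 : G) :
    act K G (dd K G gg h) (hmul K G (dd K G a1 b1) (dd K G a2 b2))
      = hmul K G (act K G (dd K G ((h * b2⁻¹ * h⁻¹)⁻¹ * gg) h) (dd K G a1 b1))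
          (act K G (dd K G (h * b2⁻¹ * h⁻¹) h) (dd K G a2 b2)) := by
  rw [hmul_dd]
  by_cases h1 : a1 = a2 * b1⁻¹
  · subst h1
    rw [if_pos rfl, act_dd, act_dd, act_dd, if_pos rfl]
    by_cases h2 : gg = h * (b1 * b2)⁻¹ * h⁻¹
    · subst h2
      rw [if_pos rfl, if_pos (by group), hmul_dd, if_pos (by group)]
      exact dd_eq K G (by group) (by group)
    · rw [if_neg h2, if_neg (fun hcc => h2 ((solve_inv_mul hcc).trans (by group))),
        map_zero, LinearMap.zero_apply]
  · rw [if_neg h1, map_zero, act_dd, act_dd, if_pos rfl]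
    by_cases hcc : (h * b2⁻¹ * h⁻¹)⁻¹ * gg = h * b1⁻¹ * h⁻¹
    · rw [if_pos hcc, hmul_dd, if_neg (fun hx => h1 (by
        have e : a1 = a1 * h⁻¹ * h := by group
        rw [hx] at e
        exact e.trans (by group)))]
    · rw [if_neg hcc, map_zero, LinearMap.zero_apply]

lemma goal9a (gg h a2 b2 : G) (x : DH K G) :
    act K G (dd K G gg h) (hmul K G x (dd K G a2 b2))
      = ∑ᶠ p : G, hmul K G (act K G (dd K G (p⁻¹ * gg) h) x)
          (act K G (dd K G p h) (dd K G a2 b2)) := by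
  have hz : ∀ p : G, p ≠ h * b2⁻¹ * h⁻¹ →
      hmul K G (act K G (dd K G (p⁻¹ * gg) h) x)
        (act K G (dd K G p h) (dd K G a2 b2)) = 0 := by
    intro p hp
    rw [act_dd, if_neg hp, map_zero]
  rw [finsum_eq_single _ (h * b2⁻¹ * h⁻¹) hz]
  have := dh_ext' K G
    (f := (act K G (dd K G gg h)) ∘ₗ ((hmul K G).flip (dd K G a2 b2)))
    (g := ((hmul K G).flip (act K G (dd K G (h * b2⁻¹ * h⁻¹) h) (dd K G a2 b2))) ∘ₗ
      (act K G (dd K G ((h * b2⁻¹ * h⁻¹)⁻¹ * gg) h)))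
    (fun a1 b1 => by
      simpa only [LinearMap.coe_comp, Function.comp_apply, LinearMap.flip_apply]
        using goal9_core K G gg h a1 b1 a2 b2) x
  simpa only [LinearMap.coe_comp, Function.comp_apply, LinearMap.flip_apply] using this

lemma goal9 (g h : G) (x y : DH K G) :
    act K G (dd K G g h) (hmul K G x y)
      = ∑ᶠ p : G, hmul K G (act K G (dd K G (p⁻¹ * g) h) x)
          (act K G (dd K G p h) y) := by
  have main := finsum_ext K G
    (F := fun p => (hmul K G (act K G (dd K G (p⁻¹ * g) h) x)) ∘ₗ
      (act K G (dd K G p h)))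
    (Ψ := (act K G (dd K G g h)) ∘ₗ (hmul K G x))
    (hfin := ?_) (heq := ?_) y
  · simpa only [LinearMap.coe_comp, Function.comp_apply] using main.symm
  · intro a2 b2
    refine Set.Finite.subset (Set.finite_singleton (h * b2⁻¹ * h⁻¹)) ?_
    intro p hp
    simp only [Function.mem_support, LinearMap.coe_comp, Function.comp_apply] at hp
    by_cases hc : p = h * b2⁻¹ * h⁻¹
    · exact hc
    · rw [act_dd, if_neg hc, map_zero] at hp
      exact absurd rfl hp
  · intro a2 b2
    simpa only [LinearMap.coe_comp, Function.comp_apply] using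
      (goal9a K G g h a2 b2 x).symm

/-- `Φ(u ⊗ w) := (1 ⊗ hmul(w))(Γ(u) ⊗ 1)`-style auxiliary map for the comodule algebra
property. -/
noncomputable def Phi : DH K G ⊗[K] DH K G →ₗ[K] (DH K G →ₗ[K] DH K G ⊗[K] DH K G) :=
  TensorProduct.lift (LinearMap.mk₂ K
    (fun u w => (LinearMap.lTensor (DH K G) (hmul K G w)) ∘ₗ cG K G u)
    (fun u u' w => by ext v; simp [map_add])
    (fun c u w => by ext v; simp [map_smul])
    (fun u w w' => by ext v; simp [map_add, LinearMap.lTensor_add])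
    (fun c u w => by ext v; simp [map_smul, LinearMap.lTensor_smul]))

lemma Phi_tmul (u w y : DH K G) :
    Phi K G (u ⊗ₜ[K] w) y = (LinearMap.lTensor (DH K G) (hmul K G w)) (cG K G u y) := by
  simp [Phi]

lemma key11_core (a b a' b' c d : G) :
    cG K G (dd K G a b) (hmul K G (dd K G a' b') (dd K G c d))
      = Phi K G (cG K G (dd K G a b) (dd K G a' b')) (dd K G c d) := by
  rw [hmul_dd, cG_dd, Phi_tmul, cG_dd, LinearMap.lTensor_tmul, hmul_dd]
  by_cases h1 : a' = c * b'⁻¹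
  · subst h1
    rw [if_pos rfl, cG_dd, if_pos (by group)]
    exact congrArg₂ (fun u v => u ⊗ₜ[K] v) (dd_eq K G rfl (by group)) rfl
  · rw [if_neg h1, map_zero, if_neg (fun hcc => h1 (by
      have e : a' = a' * b⁻¹ * a⁻¹ * b * (b⁻¹ * a⁻¹ * b)⁻¹ := by group
      rw [hcc] at e
      exact e.trans (by group))), tmul_zero]

lemma key11 (g x y : DH K G) :
    cG K G g (hmul K G x y) = Phi K G (cG K G g x) y := by
  have s1 : ∀ (a b a' b' : G) (y : DH K G),
      cG K G (dd K G a b) (hmul K G (dd K G a' b') y)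
        = Phi K G (cG K G (dd K G a b) (dd K G a' b')) y := by
    intro a b a' b' y
    have := dh_ext' K G
      (f := (cG K G (dd K G a b)) ∘ₗ (hmul K G (dd K G a' b')))
      (g := Phi K G (cG K G (dd K G a b) (dd K G a' b')))
      (fun c d => by
        simpa only [LinearMap.coe_comp, Function.comp_apply] using
          key11_core K G a b a' b' c d) y
    simpa only [LinearMap.coe_comp, Function.comp_apply] using this
  have s2 : ∀ (a b : G) (x y : DH K G),
      cG K G (dd K G a b) (hmul K G x y) = Phi K G (cG K G (dd K G a b) x) y := by
    intro a b x y
    have := dh_ext' K G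
      (f := (cG K G (dd K G a b)) ∘ₗ ((hmul K G).flip y))
      (g := (Phi K G ∘ₗ cG K G (dd K G a b)).flip y)
      (fun a' b' => by
        simpa only [LinearMap.coe_comp, Function.comp_apply, LinearMap.flip_apply]
          using s1 a b a' b' y) x
    simpa only [LinearMap.coe_comp, Function.comp_apply, LinearMap.flip_apply] using this
  have := dh_ext' K G
    (f := ((cG K G).flip (hmul K G x y)))
    (g := (Phi K G ∘ₗ (cG K G).flip x).flip y)
    (fun a b => by
      simpa only [LinearMap.coe_comp, Function.comp_apply, LinearMap.flip_apply]
        using s2 a b x y) g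
  simpa only [LinearMap.coe_comp, Function.comp_apply, LinearMap.flip_apply] using this

lemma goal11 (g x y : DH K G) (s : Finset ℕ) (u w : ℕ → DH K G)
    (hdec : cG K G g x = ∑ k ∈ s, u k ⊗ₜ[K] w k) :
    cG K G g (hmul K G x y)
      = ∑ k ∈ s, (LinearMap.lTensor (DH K G) (hmul K G (w k))) (cG K G (u k) y) := by
  rw [key11 K G g x y, hdec, map_sum, LinearMap.sum_apply]
  exact Finset.sum_congr rfl fun k _ => by rw [Phi_tmul]

lemma goal12_core (g h a1 b1 a2 b2 : G) :
    cGR K G (dmul K G (dd K G (g * h * b2 * h⁻¹) h) (dd K G a1 b1))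
        (act K G (dd K G ((g * h * b2 * h⁻¹)⁻¹ * g) h) (dd K G a2 b2))
      = (dmul K G (dd K G ((h * b2⁻¹ * h⁻¹)⁻¹ * g) (h * b2)) (dd K G a1 b1)) ⊗ₜ[K]
          (act K G (dd K G (h * b2⁻¹ * h⁻¹) h)
            (dd K G (a2 * h⁻¹ * ((h * b2⁻¹ * h⁻¹)⁻¹ * g)⁻¹ * h) b2)) := by
  rw [act_dd, if_pos (by group), dmul_dd, dmul_dd, act_dd, if_pos rfl]
  by_cases hc1 : g * h * b2 * h⁻¹ = h * a1 * h⁻¹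
  · rw [if_pos hc1, if_pos (by rw [conj_solve hc1]; group), cGR_dd]
    exact congrArg₂ (fun u v => u ⊗ₜ[K] v) (dd_eq K G (by group) (by group))
      (dd_eq K G (by group) (by group))
  · rw [if_neg hc1, map_zero, LinearMap.zero_apply,
      if_neg (fun hcc => hc1 (by rw [conj_solve hcc]; group)), zero_tmul]

lemma goal12 (g h : G) (d' v : DH K G) :
    ∑ᶠ p : G, cGR K G (dmul K G (dd K G p h) d') (act K G (dd K G (p⁻¹ * g) h) v)
      = ∑ᶠ p : G, (TensorProduct.map ((dmul K G).flip d') (act K G (dd K G p h)))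
          (cG K G (dd K G (p⁻¹ * g) h) v) := by
  have hfinF : ∀ a2 b2 : G, (Function.support fun p : G =>
      ((cGR K G (dmul K G (dd K G p h) d')) ∘ₗ (act K G (dd K G (p⁻¹ * g) h)))
        (dd K G a2 b2)).Finite := by
    intro a2 b2
    refine Set.Finite.subset (Set.finite_singleton (g * h * b2 * h⁻¹)) ?_
    intro p hp
    rw [Function.mem_support] at hp
    simp only [LinearMap.coe_comp, Function.comp_apply] at hp
    by_cases hc : p⁻¹ * g = h * b2⁻¹ * h⁻¹
    · have e : p = g * (p⁻¹ * g)⁻¹ := by group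
      rw [hc] at e
      exact e.trans (by group)
    · rw [act_dd, if_neg hc, map_zero] at hp
      exact absurd rfl hp
  have hfinF' : ∀ a2 b2 : G, (Function.support fun p : G =>
      ((TensorProduct.map ((dmul K G).flip d') (act K G (dd K G p h))) ∘ₗ
        (cG K G (dd K G (p⁻¹ * g) h))) (dd K G a2 b2)).Finite := by
    intro a2 b2
    refine Set.Finite.subset (Set.finite_singleton (h * b2⁻¹ * h⁻¹)) ?_
    intro p hp
    rw [Function.mem_support] at hp
    simp only [LinearMap.coe_comp, Function.comp_apply] at hp
    by_cases hc : p = h * b2⁻¹ * h⁻¹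
    · exact hc
    · rw [cG_dd, TensorProduct.map_tmul, act_dd, if_neg hc, tmul_zero] at hp
      exact absurd rfl hp
  have main := dh_ext' K G
    (f := finsumMap K G (fun p => (cGR K G (dmul K G (dd K G p h) d')) ∘ₗ
      (act K G (dd K G (p⁻¹ * g) h))) hfinF)
    (g := finsumMap K G (fun p => (TensorProduct.map ((dmul K G).flip d')
      (act K G (dd K G p h))) ∘ₗ (cG K G (dd K G (p⁻¹ * g) h))) hfinF')
    ?_ v
  · simpa only [finsumMap_apply, LinearMap.coe_comp, Function.comp_apply] using main
  intro a2 b2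
  rw [finsumMap_apply, finsumMap_apply]
  simp only [LinearMap.coe_comp, Function.comp_apply]
  have z1 : ∀ p : G, p ≠ g * h * b2 * h⁻¹ →
      cGR K G (dmul K G (dd K G p h) d')
        (act K G (dd K G (p⁻¹ * g) h) (dd K G a2 b2)) = 0 := by
    intro p hp
    have hc : ¬(p⁻¹ * g = h * b2⁻¹ * h⁻¹) := by
      intro hc
      apply hp
      have e : p = g * (p⁻¹ * g)⁻¹ := by group
      rw [hc] at e
      exact e.trans (by group)
    rw [act_dd, if_neg hc, map_zero]
  have z2 : ∀ p : G, p ≠ h * b2⁻¹ * h⁻¹ →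
      (TensorProduct.map ((dmul K G).flip d') (act K G (dd K G p h)))
        (cG K G (dd K G (p⁻¹ * g) h) (dd K G a2 b2)) = 0 := by
    intro p hp
    rw [cG_dd, TensorProduct.map_tmul, act_dd, if_neg hp, tmul_zero]
  rw [finsum_eq_single _ (g * h * b2 * h⁻¹) z1, finsum_eq_single _ (h * b2⁻¹ * h⁻¹) z2]
  rw [cG_dd, TensorProduct.map_tmul, LinearMap.flip_apply]
  have := dh_ext' K G
    (f := ((cGR K G).flip
        (act K G (dd K G ((g * h * b2 * h⁻¹)⁻¹ * g) h) (dd K G a2 b2))) ∘ₗ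
      (dmul K G (dd K G (g * h * b2 * h⁻¹) h)))
    (g := ((TensorProduct.mk K (DH K G) (DH K G)).flip
        (act K G (dd K G (h * b2⁻¹ * h⁻¹) h)
          (dd K G (a2 * h⁻¹ * ((h * b2⁻¹ * h⁻¹)⁻¹ * g)⁻¹ * h) b2))) ∘ₗ
      (dmul K G (dd K G ((h * b2⁻¹ * h⁻¹)⁻¹ * g) (h * b2))))
    (fun a1 b1 => by
      simpa only [LinearMap.coe_comp, Function.comp_apply, LinearMap.flip_apply,
        TensorProduct.mk_apply] using goal12_core K G g h a1 b1 a2 b2) d'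
  simpa only [LinearMap.coe_comp, Function.comp_apply, LinearMap.flip_apply,
    TensorProduct.mk_apply] using this

end YD


/-- Let `G` be a group, `𝓓 = K(G) ⋈ K[G]` the Drinfel'd double and
`𝓗 = K(G) # K[G]` the Heisenberg double.  The action
`(δ_p ⋈ q) · (δ_{p'} # q') = δ_{p'q'q⁻¹p} δ_{p'q⁻¹} # qq'q⁻¹`
and the coaction `Γ(δ_p # q) = ∑_{s ∈ G} (δ_{s⁻¹p} ⋈ q) ⊗ (δ_s # q)` make `K(G) # K[G]` a
(left-left) Yetter-Drinfel'd module algebra over `K(G) ⋈ K[G]`.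
The coaction takes values in the completed module `M₀(𝓓 ⊗ 𝓗)`, so it is rendered by its
left-cut and right-cut maps `Γcut g x = (g ⊗ 1)Γ(x)` and `ΓcutR g x = Γ(x)(g ⊗ 1)`, and
the comodule and Yetter-Drinfel'd conditions are stated in the correspondingly covered
form, using finite sums `∑ᶠ` over `G`. -/
theorem heisenberg_yetter_drinfeld_group_case
    (K : Type) [Field K] (G : Type) [Group G] :
    ∃ (dmul : DH K G →ₗ[K] DH K G →ₗ[K] DH K G)
      (hmul : DH K G →ₗ[K] DH K G →ₗ[K] DH K G)
      (dcounit : DH K G →ₗ[K] K)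
      (act : DH K G →ₗ[K] DH K G →ₗ[K] DH K G)
      (Γcut ΓcutR : DH K G →ₗ[K] DH K G →ₗ[K] DH K G ⊗[K] DH K G),
      -- the Drinfel'd double product `(δ_g ⋈ h)(δ_p ⋈ q) = δ_g δ_{hph⁻¹} ⋈ hq`
      (∀ g h p q : G,
        dmul (dd K G g h) (dd K G p q)
          = (dirac K G g * dirac K G (h * p * h⁻¹)) ⊗ₜ[K] grp K G (h * q)) ∧
      -- the Heisenberg double (smash) product `(a # q)(a' # q') = a(q ▶ a') # qq'`
      (∀ (a a' : G →₀ K) (q q' : G),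
        hmul (a ⊗ₜ[K] grp K G q) (a' ⊗ₜ[K] grp K G q')
          = (a * (lreg K G q) a') ⊗ₜ[K] (grp K G q * grp K G q')) ∧
      -- the counit of `𝓓`
      (∀ g h : G, dcounit (dd K G g h)
          = (haveI := Classical.dec (g = (1:G)); if g = (1:G) then (1:K) else 0)) ∧
      -- the action `(δ_p ⋈ q) · (δ_{p'} # q') = δ_{p'q'q⁻¹p} δ_{p'q⁻¹} # qq'q⁻¹`
      (∀ p q p' q' : G,
        act (dd K G p q) (dd K G p' q')
          = (dirac K G (p' * q' * q⁻¹ * p) * dirac K G (p' * q⁻¹))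
              ⊗ₜ[K] grp K G (q * q' * q⁻¹)) ∧
      -- the coaction `Γ(δ_p # q) = ∑_{s ∈ G} (δ_{s⁻¹p} ⋈ q) ⊗ (δ_s # q)`, in cut forms
      (∀ (g : DH K G) (p q : G),
        Γcut g (dd K G p q)
          = ∑ᶠ s : G, (dmul g (dd K G (s⁻¹ * p) q)) ⊗ₜ[K] (dd K G s q)) ∧
      (∀ (g : DH K G) (p q : G),
        ΓcutR g (dd K G p q)
          = ∑ᶠ s : G, (dmul (dd K G (s⁻¹ * p) q) g) ⊗ₜ[K] (dd K G s q)) ∧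
      -- `𝓗` is a unital `𝓓`-module
      (∀ d d' x : DH K G, act (dmul d d') x = act d (act d' x)) ∧
      Submodule.span K {x : DH K G | ∃ d h : DH K G, act d h = x} = ⊤ ∧
      -- `𝓗` is a `𝓓`-module algebra
      -- (w.r.t. `Δ(δ_g ⊗ h) = ∑_{p ∈ G} (δ_{p⁻¹g} ⊗ h) ⊗ (δ_p ⊗ h)`)
      (∀ (g h : G) (x y : DH K G),
        act (dd K G g h) (hmul x y)
          = ∑ᶠ p : G, hmul (act (dd K G (p⁻¹ * g) h) x) (act (dd K G p h) y)) ∧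
      -- `𝓗` is a `𝓓`-comodule: counit property of the coaction, in cut form
      (∀ (g : DH K G) (x : DH K G),
        (TensorProduct.lid K (DH K G)) ((LinearMap.rTensor (DH K G) dcounit) (Γcut g x))
          = dcounit g • x) ∧
      -- `𝓗` is a `𝓓`-comodule algebra: `(g ⊗ 1)Γ(xy) = ((g ⊗ 1)Γ(x))Γ(y)`, in cut form
      (∀ (g : DH K G) (x y : DH K G) (s : Finset ℕ) (u w : ℕ → DH K G),
        Γcut g x = ∑ k ∈ s, u k ⊗ₜ[K] w k →
        Γcut g (hmul x y)
          = ∑ k ∈ s, (LinearMap.lTensor (DH K G) (hmul (w k))) (Γcut (u k) y)) ∧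
      -- the Yetter-Drinfel'd compatibility condition
      -- `(d₍₁₎ · v)₍₋₁₎ d₍₂₎ d' ⊗ (d₍₁₎ · v)₍₀₎ = d₍₁₎ v₍₋₁₎ d' ⊗ d₍₂₎ · v₍₀₎`, in cut form
      (∀ (g h : G) (d' : DH K G) (v : DH K G),
        ∑ᶠ p : G, ΓcutR (dmul (dd K G p h) d') (act (dd K G (p⁻¹ * g) h) v)
          = ∑ᶠ p : G,
              (TensorProduct.map (dmul.flip d') (act (dd K G p h)))
                (Γcut (dd K G (p⁻¹ * g) h) v)) :=
  ⟨YD.dmul K G, YD.hmul K G, YD.dcounit K G, YD.act K G, YD.cG K G, YD.cGR K G,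
    YD.goal1 K G, YD.goal2 K G, YD.goal3 K G, YD.goal4 K G, YD.goal5 K G, YD.goal6 K G,
    YD.goal7 K G, YD.goal8 K G, YD.goal9 K G, YD.goal10 K G, YD.goal11 K G, YD.goal12 K G⟩
end
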